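/- arXiv:math/0703752 — 8 statements merged into one kernel-verified Lean document; each statement's English description precedes it below -/
import Mathlib

section
/- (Denjoy–Koksma inequality) If f : 𝕋 → ℝ is a function of bounded variation on the circle and qₙ is a denominator of a continued fraction convergent of the irrational α, then for every x ∈ 𝕋, |Σ_{k=0}^{qₙ−1} f(x + kα) − qₙ ∫_𝕋 f dλ| ≤ Var f. -/
open MeasureTheory Set


lemma evar_shift (f : ℝ → ℝ) (c : ℝ) (hf : ∀ y, f (y + c) = f y) (a b : ℝ) :
    eVariationOn f (Icc (a + c) (b + c)) = eVariationOn f (Icc a b) := by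
  have him : (fun y => y + c) '' Icc a b = Icc (a + c) (b + c) := Set.image_add_const_Icc c a b
  have hm : MonotoneOn (fun y => y + c) (Icc a b) := fun u _ v _ huv => by simpa using huv
  have := eVariationOn.comp_eq_of_monotoneOn f (fun y => y + c) hm
  rw [him] at this
  rw [← this]
  congr 1
  funext y
  exact hf y

lemma evar_Icc_add (f : ℝ → ℝ) {a b c : ℝ} (hab : a ≤ b) (hbc : b ≤ c) :
    eVariationOn f (Icc a b) + eVariationOn f (Icc b c) = eVariationOn f (Icc a c) := by
  simpa using eVariationOn.Icc_add_Icc f (s := Set.univ) hab hbc (Set.mem_univ b)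

lemma per_nat {f : ℝ → ℝ} (hper : Function.Periodic f 1) : ∀ (m : ℕ) (z : ℝ), f (z + m) = f z := by
  intro m
  induction m with
  | zero => simp
  | succ m ih => intro z; push_cast; rw [← add_assoc, hper (z + m)] at *; exact ih z

lemma per_int {f : ℝ → ℝ} (hper : Function.Periodic f 1) (m : ℤ) (z : ℝ) : f (z + m) = f z := by
  induction m using Int.rec with
  | ofNat m => exact_mod_cast per_nat hper m z
  | negSucc m =>
      have := per_nat hper (m + 1) (z + Int.negSucc m)
      simp only [Int.negSucc_eq] at *
      push_cast at this ⊢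
      rw [← this]; ring_nf

lemma evar_periodic {f : ℝ → ℝ} (hper : Function.Periodic f 1) (x : ℝ) :
    eVariationOn f (Icc x (x + 1)) = eVariationOn f (Icc 0 1) := by
  set m : ℤ := ⌈x⌉ with hm
  have h1 : x ≤ (m : ℝ) := Int.le_ceil x
  have h2 : (m : ℝ) ≤ x + 1 := (Int.ceil_lt_add_one x).le
  have hsh1 : ∀ y : ℝ, f (y + 1) = f y := fun y => hper y
  have hshm : ∀ y : ℝ, f (y + (m : ℝ)) = f y := fun y => per_int hper m y
  have e1 : eVariationOn f (Icc x (x + 1)) =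
      eVariationOn f (Icc x m) + eVariationOn f (Icc (m : ℝ) (x + 1)) :=
    (evar_Icc_add f h1 h2).symm
  have e2 : eVariationOn f (Icc x (m : ℝ)) = eVariationOn f (Icc (x + 1) ((m : ℝ) + 1)) :=
    (evar_shift f 1 hsh1 x m).symm
  have e3 : eVariationOn f (Icc (m : ℝ) (x + 1)) + eVariationOn f (Icc (x + 1) ((m : ℝ) + 1)) =
      eVariationOn f (Icc (m : ℝ) ((m : ℝ) + 1)) :=
    evar_Icc_add f h2 (by linarith)
  have e4 : eVariationOn f (Icc ((0 : ℝ) + m) (1 + m)) = eVariationOn f (Icc 0 1) :=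
    evar_shift f m hshm 0 1
  rw [e1, e2, add_comm, e3]
  rw [show (m : ℝ) = 0 + (m : ℝ) by ring, show (0 : ℝ) + m + 1 = 1 + m by ring, e4]

lemma evar_tele (f : ℝ → ℝ) (x d : ℝ) (hd : 0 ≤ d) : ∀ N : ℕ,
    ∑ j ∈ Finset.range N, eVariationOn f (Icc (x + j * d) (x + (j + 1) * d)) =
      eVariationOn f (Icc x (x + N * d)) := by
  intro N
  induction N with
  | zero => simp
  | succ N ih =>
      rw [Finset.sum_range_succ, ih, evar_Icc_add f (by nlinarith [Nat.cast_nonneg (α := ℝ) N]) (by push_cast; nlinarith)]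
      push_cast
      ring_nf

lemma bv_intervalIntegrable (f : ℝ → ℝ) {a b : ℝ} (hab : a ≤ b)
    (h : BoundedVariationOn f (Icc a b)) : IntervalIntegrable f volume a b := by
  obtain ⟨g, h', hg, hh, hf⟩ := h.locallyBoundedVariationOn.exists_monotoneOn_sub_monotoneOn
  have hu : uIcc a b = Icc a b := Set.uIcc_of_le hab
  have : IntervalIntegrable g volume a b := (hu ▸ hg : MonotoneOn g (uIcc a b)).intervalIntegrable
  have : IntervalIntegrable (g - h') volume a b :=
    this.sub (hu ▸ hh : MonotoneOn h' (uIcc a b)).intervalIntegrable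
  rw [hf]; exact this

lemma local_bound (f : ℝ → ℝ) {c d y : ℝ} (hcd : c ≤ d) (hy : y ∈ Icc c d)
    (hint : IntervalIntegrable f volume c d) (hfin : eVariationOn f (Icc c d) ≠ ⊤) :
    |f y * (d - c) - ∫ t in c..d, f t| ≤ (d - c) * (eVariationOn f (Icc c d)).toReal := by
  have heq : f y * (d - c) - ∫ t in c..d, f t = ∫ t in c..d, (f y - f t) := by
    rw [intervalIntegral.integral_sub intervalIntegrable_const hint,
      intervalIntegral.integral_const]
    simp [smul_eq_mul]; ring
  rw [heq]
  have hb : ∀ t ∈ Set.uIoc c d, ‖f y - f t‖ ≤ (eVariationOn f (Icc c d)).toReal := by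
    intro t ht
    have ht' : t ∈ Icc c d := by
      rw [Set.uIoc_of_le hcd] at ht
      exact ⟨ht.1.le, ht.2⟩
    have := eVariationOn.edist_le f hy ht'
    have h2 : dist (f y) (f t) ≤ (eVariationOn f (Icc c d)).toReal := by
      rw [dist_edist]
      exact ENNReal.toReal_mono hfin this
    simpa [Real.dist_eq] using h2
  have := intervalIntegral.norm_integral_le_of_norm_le_const hb
  rw [abs_of_nonneg (by linarith : (0:ℝ) ≤ d - c)] at this
  simpa [Real.norm_eq_abs, mul_comm] using this

lemma dk_core (f : ℝ → ℝ) (hper : Function.Periodic f 1)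
    (hBV : BoundedVariationOn f (Icc 0 1))
    (Q : ℕ) (hQ : 0 < Q) (x' : ℝ) (y : ℕ → ℝ) (j : ℕ → ℕ)
    (hjlt : ∀ k < Q, j k < Q)
    (hinj : ∀ k1 < Q, ∀ k2 < Q, j k1 = j k2 → k1 = k2)
    (hmem : ∀ k < Q, y k ∈ Icc (x' + (j k : ℝ) / Q) (x' + ((j k : ℝ) + 1) / Q)) :
    |∑ k ∈ Finset.range Q, f (y k) - (Q : ℝ) * ∫ t in (0:ℝ)..1, f t| ≤
      (eVariationOn f (Icc 0 1)).toReal := by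
  have hQR : (0:ℝ) < Q := by exact_mod_cast hQ
  set c : ℕ → ℝ := fun i => x' + (i : ℝ) / Q with hc
  have hcsucc : ∀ i : ℕ, c (i + 1) = x' + ((i : ℝ) + 1) / Q := by
    intro i; simp only [hc]; push_cast; ring
  have hcle : ∀ i : ℕ, c i ≤ c (i + 1) := by
    intro i; rw [hcsucc]; simp only [hc]
    have : (i : ℝ) / Q ≤ ((i : ℝ) + 1) / Q := by gcongr; linarith
    linarith
  have hc0 : c 0 = x' := by simp [hc]
  have hcQ : c Q = x' + 1 := by simp only [hc]; rw [div_self (ne_of_gt hQR)]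
  -- total variation on the shifted interval
  have hBV' : BoundedVariationOn f (Icc x' (x' + 1)) := by
    unfold BoundedVariationOn at hBV ⊢
    rw [evar_periodic hper]
    exact hBV
  have hsub : ∀ i < Q, Icc (c i) (c (i + 1)) ⊆ Icc x' (x' + 1) := by
    intro i hi
    apply Icc_subset_Icc
    · have hnn : (0:ℝ) ≤ (i:ℝ)/Q := by positivity
      simp only [hc]; linarith
    · rw [hcsucc]
      have : ((i : ℝ) + 1) / Q ≤ 1 := by
        rw [div_le_one hQR]
        have : (i : ℝ) + 1 ≤ Q := by exact_mod_cast hi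
        linarith
      linarith
  have hfin : ∀ i < Q, eVariationOn f (Icc (c i) (c (i + 1))) ≠ ⊤ := by
    intro i hi
    exact ne_top_of_le_ne_top hBV' (eVariationOn.mono f (hsub i hi))
  have hint : ∀ i < Q, IntervalIntegrable f volume (c i) (c (i + 1)) := by
    intro i hi
    exact bv_intervalIntegrable f (hcle i) (BoundedVariationOn.mono hBV' (hsub i hi))
  -- split the integral
  have hIeq : (Q : ℝ) * ∫ t in (0:ℝ)..1, f t
      = ∑ i ∈ Finset.range Q, (Q : ℝ) * ∫ t in (c i)..(c (i + 1)), f t := by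
    rw [← Finset.mul_sum]
    congr 1
    have h0 : ∫ t in (0:ℝ)..1, f t = ∫ t in x'..(x' + 1), f t := by
      have := hper.intervalIntegral_add_eq 0 x'
      simpa using this
    rw [h0, ← hcQ, ← hc0]
    exact (intervalIntegral.sum_integral_adjacent_intervals hint).symm
  -- reindexing by the bijection j
  have hinj' : Set.InjOn j (Finset.range Q) := by
    intro k1 h1 k2 h2 h
    simp only [Finset.coe_range, Set.mem_Iio] at h1 h2
    exact hinj k1 h1 k2 h2 h
  have himg : (Finset.range Q).image j = Finset.range Q := by
    apply Finset.eq_of_subset_of_card_le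
    · intro m hm
      simp only [Finset.mem_image, Finset.mem_range] at hm ⊢
      obtain ⟨k, hk, rfl⟩ := hm
      exact hjlt k hk
    · rw [Finset.card_image_of_injOn hinj', Finset.card_range]
  have hreidx : ∀ g : ℕ → ℝ, ∑ i ∈ Finset.range Q, g i = ∑ k ∈ Finset.range Q, g (j k) := by
    intro g
    conv_lhs => rw [← himg]
    rw [Finset.sum_image (fun a ha b hb h => hinj' ha hb h)]
  -- per-term bound
  have hterm : ∀ k < Q,
      |f (y k) - (Q : ℝ) * ∫ t in (c (j k))..(c (j k + 1)), f t| ≤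
        (eVariationOn f (Icc (c (j k)) (c (j k + 1)))).toReal := by
    intro k hk
    have hjk := hjlt k hk
    have hy : y k ∈ Icc (c (j k)) (c (j k + 1)) := by
      rw [hcsucc]; exact hmem k hk
    have hlb := local_bound f (hcle (j k)) hy (hint _ hjk) (hfin _ hjk)
    have hdc : c (j k + 1) - c (j k) = 1 / Q := by
      rw [hcsucc]; simp only [hc]; field_simp; ring
    rw [hdc] at hlb
    have hre : f (y k) - (Q : ℝ) * ∫ t in (c (j k))..(c (j k + 1)), f t
        = (Q : ℝ) * (f (y k) * (1 / Q) - ∫ t in (c (j k))..(c (j k + 1)), f t) := by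
      field_simp
    rw [hre, abs_mul, abs_of_pos hQR]
    calc (Q : ℝ) * |f (y k) * (1 / Q) - ∫ t in (c (j k))..(c (j k + 1)), f t|
        ≤ (Q : ℝ) * ((1 / Q) * (eVariationOn f (Icc (c (j k)) (c (j k + 1)))).toReal) := by
          exact mul_le_mul_of_nonneg_left hlb hQR.le
      _ = (eVariationOn f (Icc (c (j k)) (c (j k + 1)))).toReal := by field_simp
  -- telescoping sum of variations
  have htele : ∑ i ∈ Finset.range Q, eVariationOn f (Icc (c i) (c (i + 1)))
      = eVariationOn f (Icc x' (x' + 1)) := by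
    have h := evar_tele f x' (1 / Q) (by positivity) Q
    have h2 : x' + (Q : ℝ) * (1 / Q) = x' + 1 := by field_simp
    rw [h2] at h
    rw [← h]
    apply Finset.sum_congr rfl
    intro i _
    rw [hcsucc]
    congr 1 <;> · simp only [hc]; ring
  -- put everything together
  have hsplit : ∑ k ∈ Finset.range Q, f (y k) - (Q : ℝ) * ∫ t in (0:ℝ)..1, f t
      = ∑ k ∈ Finset.range Q, (f (y k) - (Q : ℝ) * ∫ t in (c (j k))..(c (j k + 1)), f t) := by
    rw [Finset.sum_sub_distrib, hIeq, hreidx (fun i => (Q : ℝ) * ∫ t in (c i)..(c (i + 1)), f t)]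
  rw [hsplit]
  calc |∑ k ∈ Finset.range Q, (f (y k) - (Q : ℝ) * ∫ t in (c (j k))..(c (j k + 1)), f t)|
      ≤ ∑ k ∈ Finset.range Q, |f (y k) - (Q : ℝ) * ∫ t in (c (j k))..(c (j k + 1)), f t| :=
        Finset.abs_sum_le_sum_abs _ _
    _ ≤ ∑ k ∈ Finset.range Q, (eVariationOn f (Icc (c (j k)) (c (j k + 1)))).toReal := by
        apply Finset.sum_le_sum
        intro k hk
        exact hterm k (Finset.mem_range.mp hk)
    _ = ∑ i ∈ Finset.range Q, (eVariationOn f (Icc (c i) (c (i + 1)))).toReal :=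
        (hreidx (fun i => (eVariationOn f (Icc (c i) (c (i + 1)))).toReal)).symm
    _ = (∑ i ∈ Finset.range Q, eVariationOn f (Icc (c i) (c (i + 1)))).toReal := by
        rw [ENNReal.toReal_sum]
        intro i hi
        exact hfin i (Finset.mem_range.mp hi)
    _ = (eVariationOn f (Icc x' (x' + 1))).toReal := by rw [htele]
    _ = (eVariationOn f (Icc 0 1)).toReal := by rw [evar_periodic hper]

/-- Denjoy–Koksma inequality: if f : 𝕋 → ℝ (represented by a 1-periodic
function on ℝ) has bounded variation on the circle and qₙ is a denominator of a
continued fraction convergent of the irrational α, then for every x,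
|Σ_{k=0}^{qₙ−1} f(x + kα) − qₙ ∫ f| ≤ Var f. -/
theorem stmt2 (α : ℝ) (hα : Irrational α) (a : ℕ → ℕ) (p q : ℕ → ℕ)
    (ha : ∀ n, 1 ≤ n → 1 ≤ a n)
    (hq0 : q 0 = 1) (hq1 : q 1 = a 1) (hqrec : ∀ n, q (n + 2) = a (n + 2) * q (n + 1) + q n)
    (hp0 : p 0 = 0) (hp1 : p 1 = 1) (hprec : ∀ n, p (n + 2) = a (n + 2) * p (n + 1) + p n)
    (happrox : ∀ n, 1 / (2 * (q n : ℝ) * q (n + 1)) < |α - (p n : ℝ) / q n| ∧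
      |α - (p n : ℝ) / q n| < 1 / ((q n : ℝ) * q (n + 1)))
    (f : ℝ → ℝ) (hper : Function.Periodic f 1)
    (hBV : BoundedVariationOn f (Set.Icc 0 1)) :
    ∀ n, ∀ x : ℝ,
      |∑ k ∈ Finset.range (q n), f (x + k * α) - (q n : ℝ) * ∫ t in (0:ℝ)..1, f t| ≤
        (eVariationOn f (Set.Icc 0 1)).toReal := by
  -- basic facts about q
  have hqmono : ∀ m, 0 < q m ∧ q m ≤ q (m + 1) := by
    intro m
    induction m with
    | zero => exact ⟨by omega, by rw [hq0, hq1]; exact ha 1 le_rfl⟩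
    | succ m ih =>
        refine ⟨lt_of_lt_of_le ih.1 ih.2, ?_⟩
        rw [hqrec m]
        have h1 := ha (m + 2) (by omega)
        nlinarith [ih.1, ih.2]
  -- determinant identity
  have hdet : ∀ m, (p (m + 1) : ℤ) * q m - p m * q (m + 1) = (-1) ^ m := by
    intro m
    induction m with
    | zero => simp [hp0, hp1, hq0]
    | succ m ih =>
        rw [hprec m, hqrec m]
        push_cast
        linear_combination (-1 : ℤ) * ih
  -- coprimality
  have hcop : ∀ m, Nat.Coprime (p m) (q m) := by
    intro m
    rw [← Nat.isCoprime_iff_coprime]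
    have h := hdet m
    rcases neg_one_pow_eq_or ℤ m with h1 | h1 <;> rw [h1] at h
    · exact ⟨-(q (m + 1) : ℤ), (p (m + 1) : ℤ), by linarith⟩
    · exact ⟨(q (m + 1) : ℤ), -(p (m + 1) : ℤ), by linarith⟩
  intro n x
  have hQpos : 0 < q n := (hqmono n).1
  have hQR : (0:ℝ) < q n := by exact_mod_cast hQpos
  have hQ'pos : 0 < q (n + 1) := lt_of_lt_of_le hQpos (hqmono n).2
  have hQ'R : (0:ℝ) < q (n + 1) := by exact_mod_cast hQ'pos
  have hQle : (q n : ℝ) ≤ q (n + 1) := by exact_mod_cast (hqmono n).2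
  set δ : ℝ := α - (p n : ℝ) / q n with hδdef
  have happ := (happrox n).2
  have hδne : δ ≠ 0 := by
    intro h
    apply hα
    exact ⟨(p n : ℚ) / (q n : ℚ), by push_cast; linarith [sub_eq_zero.mp h]⟩
  have happ' : (q n : ℝ) * q (n + 1) * |δ| < 1 := by
    rw [lt_div_iff₀ (by positivity)] at happ
    linarith
  have hkδ : ∀ k < q n, (k : ℝ) * |δ| * q n < 1 := by
    intro k hk
    have hk1 : (k : ℝ) ≤ (q n : ℝ) - 1 := by
      have : (k : ℝ) + 1 ≤ q n := by exact_mod_cast hk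
      linarith
    have habs : (0:ℝ) ≤ |δ| := abs_nonneg δ
    calc (k : ℝ) * |δ| * q n ≤ ((q n : ℝ) - 1) * |δ| * q n := by
          apply mul_le_mul_of_nonneg_right (mul_le_mul_of_nonneg_right hk1 habs) hQR.le
      _ ≤ (q n : ℝ) * q (n + 1) * |δ| := by
          nlinarith [mul_nonneg (mul_nonneg hQR.le habs) (sub_nonneg.mpr hQle),
            mul_nonneg hQR.le habs]
      _ < 1 := happ'
  have hkδ' : ∀ k < q n, (k : ℝ) * |δ| < 1 / q n := by
    intro k hk
    rw [lt_div_iff₀ hQR]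
    exact hkδ k hk
  -- the bijection
  set j : ℕ → ℕ := fun k => (k * p n) % q n with hj
  have hjlt : ∀ k < q n, j k < q n := fun k _ => Nat.mod_lt _ hQpos
  have hinj : ∀ k1 < q n, ∀ k2 < q n, j k1 = j k2 → k1 = k2 := by
    intro k1 h1 k2 h2 h
    have hcast : ((k1 * p n : ℕ) : ZMod (q n)) = ((k2 * p n : ℕ) : ZMod (q n)) := by
      rw [ZMod.natCast_eq_natCast_iff']
      exact h
    push_cast at hcast
    have hu : IsUnit ((p n : ℕ) : ZMod (q n)) := by
      refine ⟨ZMod.unitOfCoprime (p n) (hcop n), ?_⟩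
      simp [ZMod.coe_unitOfCoprime]
    have hk12 : ((k1 : ℕ) : ZMod (q n)) = ((k2 : ℕ) : ZMod (q n)) :=
      hu.mul_left_injective hcast
    rw [ZMod.natCast_eq_natCast_iff'] at hk12
    rwa [Nat.mod_eq_of_lt h1, Nat.mod_eq_of_lt h2] at hk12
  -- arithmetic identity
  set y : ℕ → ℝ := fun k => x + (j k : ℝ) / q n + k * δ with hy
  have harith : ∀ k : ℕ, x + k * α = y k + ((k * p n) / q n : ℕ) := by
    intro k
    have hdm := Nat.div_add_mod (k * p n) (q n)
    have hdm' : (q n : ℝ) * ((k * p n) / q n : ℕ) + ((k * p n) % q n : ℕ) = k * p n := by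
      exact_mod_cast hdm
    simp only [hy, hj, hδdef]
    field_simp
    ring_nf
    ring_nf at hdm'
    nlinarith [hdm']
  have hsum : ∑ k ∈ Finset.range (q n), f (x + k * α) = ∑ k ∈ Finset.range (q n), f (y k) := by
    apply Finset.sum_congr rfl
    intro k _
    rw [harith k, per_nat hper]
  rw [hsum]
  clear_value δ j y
  -- case split on the sign of δ
  rcases lt_or_gt_of_ne hδne with hneg | hpos
  · -- δ < 0 : use x' = x - 1/q n
    have habs : |δ| = -δ := abs_of_neg hneg
    apply dk_core f hper hBV (q n) hQpos (x - 1 / q n) y j hjlt hinj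
    intro k hk
    have h1 := hkδ' k hk
    rw [habs, mul_neg] at h1
    have h2 : (k : ℝ) * δ ≤ 0 :=
      mul_nonpos_of_nonneg_of_nonpos (Nat.cast_nonneg k) hneg.le
    rw [hy]
    constructor
    · linarith
    · have hrw : ((j k : ℝ) + 1) / q n = (j k : ℝ) / q n + 1 / q n := by ring
      rw [hrw]
      linarith
  · -- δ > 0 : use x' = x
    have habs : |δ| = δ := abs_of_pos hpos
    apply dk_core f hper hBV (q n) hQpos x y j hjlt hinj
    intro k hk
    have h1 := hkδ' k hk
    rw [habs] at h1
    have h2 : (0:ℝ) ≤ (k : ℝ) * δ := mul_nonneg (Nat.cast_nonneg k) hpos.le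
    rw [hy]
    constructor
    · linarith
    · have hrw : ((j k : ℝ) + 1) / q n = (j k : ℝ) / q n + 1 / q n := by ring
      rw [hrw]
      linarith
end

section
/- Let α be irrational with bounded partial quotients. Then there exist constants C₁, C₂ > 0 such that for each m ∈ ℕ, every interval I in the partition of the circle determined by the points 0, −α, …, −(m−1)α satisfies C₁/m ≤ |I| ≤ C₂/m. -/
set_option maxHeartbeats 1000000

/-- Distance from a real number to the nearest integer (= distance on the circle ℝ/ℤ). -/
noncomputable def distNearestInt (x : ℝ) : ℝ := |x - round x|

open GenContFract



lemma notTerm (α : ℝ) (hα : Irrational α) : ∀ n, ¬(GenContFract.of α).TerminatedAt n := by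
  intro n h
  obtain ⟨q, hq⟩ := (terminates_iff_rat α).mp ⟨n, h⟩
  exact hα ⟨q, hq.symm⟩

lemma exists_gp (α : ℝ) (hα : Irrational α) (n : ℕ) :
    ∃ gp : GenContFract.Pair ℝ, (GenContFract.of α).s.get? n = some gp ∧ gp.a = 1 ∧
      (∃ z : ℤ, gp.b = (z : ℝ)) ∧ 1 ≤ gp.b ∧ (GenContFract.of α).partDens.get? n = some gp.b := by
  obtain ⟨gp, hgp⟩ := Option.ne_none_iff_exists'.1 (notTerm α hα n)
  exact ⟨gp, hgp, of_partNum_eq_one (partNum_eq_s_a hgp),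
    exists_int_eq_of_partDen (partDen_eq_s_b hgp), of_one_le_get?_partDen (partDen_eq_s_b hgp),
    partDen_eq_s_b hgp⟩

lemma den0 (α : ℝ) : (GenContFract.of α).dens 0 = 1 := zeroth_den_eq_one

lemma den_ge_one (α : ℝ) (hα : Irrational α) (n : ℕ) : 1 ≤ (GenContFract.of α).dens n := by
  have h := succ_nth_fib_le_of_nth_den (v := α) (n := n) (by
    cases n with
    | zero => exact Or.inl rfl
    | succ m => exact Or.inr (notTerm α hα m))
  calc (1:ℝ) = ((1:ℕ):ℝ) := by norm_num
  _ ≤ (Nat.fib (n+1) : ℝ) := by exact_mod_cast Nat.one_le_iff_ne_zero.mpr (Nat.fib_pos.mpr n.succ_pos).ne'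
  _ ≤ _ := h

lemma den_pos (α : ℝ) (hα : Irrational α) (n : ℕ) : 0 < (GenContFract.of α).dens n :=
  lt_of_lt_of_le one_pos (den_ge_one α hα n)

lemma den_mono (α : ℝ) (n : ℕ) : (GenContFract.of α).dens n ≤ (GenContFract.of α).dens (n+1) :=
  of_den_mono

lemma den_rec (α : ℝ) (hα : Irrational α) (n : ℕ) :
    ∃ b : ℝ, (GenContFract.of α).partDens.get? (n+1) = some b ∧ 1 ≤ b ∧
    (GenContFract.of α).dens (n+2) = b * (GenContFract.of α).dens (n+1) + (GenContFract.of α).dens n := by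
  obtain ⟨gp, hgp, ha, _, hb, hpd⟩ := exists_gp α hα (n+1)
  exact ⟨gp.b, hpd, hb, by rw [dens_recurrence hgp rfl rfl, ha, one_mul]⟩

lemma den_fib_growth (α : ℝ) (hα : Irrational α) (n : ℕ) :
    (GenContFract.of α).dens (n+1) + (GenContFract.of α).dens n ≤ (GenContFract.of α).dens (n+2) := by
  obtain ⟨b, _, hb, hrec⟩ := den_rec α hα n
  nlinarith [den_pos α hα (n+1)]


-- growth bound
lemma den_growth_bound (α : ℝ) (hα : Irrational α) (B : ℝ)
    (hB : ∀ n : ℕ, ∀ b ∈ (GenContFract.of α).partDens.get? n, b ≤ B) (n : ℕ) :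
    (GenContFract.of α).dens (n+1) ≤ (B+1) * (GenContFract.of α).dens n := by
  cases n with
  | zero =>
    obtain ⟨gp, hgp, _, _, hb1, hpd⟩ := exists_gp α hα 0
    have h1 : (GenContFract.of α).dens 1 = gp.b := first_den_eq hgp
    have := hB 0 gp.b hpd
    rw [h1, den0]; linarith
  | succ m =>
    obtain ⟨b, hpd, hb1, hrec⟩ := den_rec α hα m
    have hB' := hB (m+1) b hpd
    have h1 := den_ge_one α hα m
    have h2 := den_mono α m
    have h3 := den_pos α hα (m+1)
    rw [hrec]; nlinarith

-- unboundedness: dens (2k) ≥ k+1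
lemma den_unbounded (α : ℝ) (hα : Irrational α) (C : ℝ) : ∃ n, C ≤ (GenContFract.of α).dens n := by
  have key : ∀ k : ℕ, (k:ℝ) + 1 ≤ (GenContFract.of α).dens (2*k) := by
    intro k
    induction k with
    | zero => simpa using den_ge_one α hα 0
    | succ m ih =>
      have h := den_fib_growth α hα (2*m)
      have h2 := den_ge_one α hα (2*m+1)
      have : 2*(m+1) = 2*m+2 := by ring
      rw [this]; push_cast; linarith
  obtain ⟨k, hk⟩ := exists_nat_ge C
  exact ⟨2*k, le_trans (by push_cast; linarith) (key k)⟩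

-- integrality
lemma num_den_int (α : ℝ) (hα : Irrational α) (n : ℕ) :
    (∃ p : ℤ, (GenContFract.of α).nums n = (p:ℝ)) ∧
    (∃ q : ℤ, (GenContFract.of α).dens n = (q:ℝ)) := by
  induction n using Nat.strong_induction_on with
  | _ n ih =>
    match n with
    | 0 => exact ⟨⟨⌊α⌋, by rw [num_eq_conts_a]; simpa [GenContFract.of_h_eq_floor] using
        (zeroth_num_eq_h (g := GenContFract.of α)).symm ▸ rfl⟩, ⟨1, by rw [den0]; norm_num⟩⟩
    | 1 =>
      obtain ⟨gp, hgp, ha, ⟨z, hz⟩, _, _⟩ := exists_gp α hα 0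
      constructor
      · exact ⟨z * ⌊α⌋ + 1, by
          rw [first_num_eq hgp, GenContFract.of_h_eq_floor, ha, hz]; push_cast; ring⟩
      · exact ⟨z, by rw [first_den_eq hgp, hz]⟩
    | (m+2) =>
      obtain ⟨gp, hgp, ha, ⟨z, hz⟩, _, _⟩ := exists_gp α hα (m+1)
      obtain ⟨⟨p0, hp0⟩, ⟨q0, hq0⟩⟩ := ih m (by omega)
      obtain ⟨⟨p1, hp1⟩, ⟨q1, hq1⟩⟩ := ih (m+1) (by omega)
      constructor
      · exact ⟨z * p1 + p0, by
          rw [nums_recurrence hgp hp0 hp1, ha, hz]; push_cast; ring⟩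
      · exact ⟨z * q1 + q0, by
          rw [dens_recurrence hgp hq0 hq1, ha, hz]; push_cast; ring⟩


-- |dens n * α - nums n| ≤ 1 / dens (n+1)
lemma approx (α : ℝ) (hα : Irrational α) (n : ℕ) :
    |(GenContFract.of α).dens n * α - (GenContFract.of α).nums n| ≤ 1 / (GenContFract.of α).dens (n+1) := by
  have h := abs_sub_convs_le (v := α) (n := n) (notTerm α hα n)
  rw [conv_eq_num_div_den] at h
  have hq := den_pos α hα n
  have hq1 := den_pos α hα (n+1)
  have key : (GenContFract.of α).dens n * α - (GenContFract.of α).nums n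
      = (GenContFract.of α).dens n * (α - (GenContFract.of α).nums n / (GenContFract.of α).dens n) := by
    field_simp
  rw [key, abs_mul, abs_of_pos hq]
  have h2 := mul_le_mul_of_nonneg_left h hq.le
  calc (GenContFract.of α).dens n * |α - (GenContFract.of α).nums n / (GenContFract.of α).dens n|
      ≤ (GenContFract.of α).dens n * (1 / ((GenContFract.of α).dens n * (GenContFract.of α).dens (n+1))) := h2
    _ = 1 / (GenContFract.of α).dens (n+1) := by field_simp

lemma determinant' (α : ℝ) (hα : Irrational α) (n : ℕ) :
    (GenContFract.of α).nums n * (GenContFract.of α).dens (n+1) -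
      (GenContFract.of α).dens n * (GenContFract.of α).nums (n+1) = (-1)^(n+1) := by
  have := SimpContFract.determinant (s := SimpContFract.of α) (n := n)
  have hco : ((SimpContFract.of α : SimpContFract ℝ) : GenContFract ℝ) = GenContFract.of α := rfl
  rw [hco] at this
  exact this (notTerm α hα n)


lemma badly (α : ℝ) (hα : Irrational α) (B : ℝ)
    (hB : ∀ n : ℕ, ∀ b ∈ (GenContFract.of α).partDens.get? n, b ≤ B) (hB1 : 1 ≤ B) :
    ∀ q : ℕ, 1 ≤ q → ∀ p : ℤ, 1/(8*(B+1)) / q ≤ |(q:ℝ) * α - p| := by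
  set g := GenContFract.of α with hg
  set K := B + 1 with hK
  have hK2 : 2 ≤ K := by linarith
  intro q hq p
  have hqR : (1:ℝ) ≤ (q:ℝ) := by exact_mod_cast hq
  have hqpos : (0:ℝ) < q := by linarith
  -- find minimal n with 2q ≤ dens (n+1)
  have hex : ∃ n, 2*(q:ℝ) ≤ g.dens (n+1) := by
    obtain ⟨N, hN⟩ := den_unbounded α hα (2*q)
    exact ⟨N, le_trans hN (den_mono α N)⟩
  obtain ⟨n, hn1, hmin⟩ : ∃ n, (2*(q:ℝ) ≤ g.dens (n+1)) ∧
      ∀ m, m < n → ¬(2*(q:ℝ) ≤ g.dens (m+1)) :=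
    ⟨Nat.find hex, Nat.find_spec hex, fun m hm => Nat.find_min hex hm⟩
  have hQn : g.dens n ≤ 2*q := by
    cases n with
    | zero => rw [show g.dens 0 = 1 from den0 α]; linarith
    | succ m =>
      have := hmin m (by omega)
      push_neg at this
      linarith
  have hQn1 : g.dens (n+1) ≤ 2*K*q :=
    le_trans (den_growth_bound α hα B hB n) (by nlinarith [den_pos α hα n])
  obtain ⟨⟨pn, hpn⟩, ⟨qn, hqn⟩⟩ := num_den_int α hα n
  have hQnpos := den_pos α hα n
  have hQn1pos := den_pos α hα (n+1)
  have happrox := approx α hα n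
  have hδq : (q:ℝ) * |g.dens n * α - g.nums n| ≤ 1/2 := by
    have : (q:ℝ) * |g.dens n * α - g.nums n| ≤ q * (1 / g.dens (n+1)) := by
      exact mul_le_mul_of_nonneg_left happrox hqpos.le
    apply le_trans this
    rw [mul_one_div, div_le_div_iff₀ hQn1pos (by norm_num)]
    linarith
  by_cases hcase : p * qn = pn * q
  · -- p/q = Pn/Qn
    have heq : g.dens n * ((q:ℝ) * α - p) = q * (g.dens n * α - g.nums n) := by
      have : (p:ℝ) * qn = (pn:ℝ) * q := by exact_mod_cast hcase
      rw [hpn, hqn] at *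
      nlinarith [this]
    -- lower bound on δn from determinant
    have hdet := determinant' α hα n
    have hδ1 := approx α hα (n+1)
    have hQn2 : 2 * g.dens n ≤ g.dens (n+2) := by
      have h1 := den_fib_growth α hα n
      have h2 := den_mono α n
      linarith
    have hδn : 1 / (2 * g.dens (n+1)) ≤ |g.dens n * α - g.nums n| := by
      have key : (1:ℝ) = |g.dens (n+1) * (g.dens n * α - g.nums n)
          - g.dens n * (g.dens (n+1) * α - g.nums (n+1))| := by
        have h0 : g.dens (n+1) * (g.dens n * α - g.nums n)
            - g.dens n * (g.dens (n+1) * α - g.nums (n+1))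
            = -(g.nums n * g.dens (n+1) - g.dens n * g.nums (n+1)) := by ring
        rw [h0, hdet, abs_neg, abs_neg_one_pow]
      have htri : |g.dens (n+1) * (g.dens n * α - g.nums n)
          - g.dens n * (g.dens (n+1) * α - g.nums (n+1))|
          ≤ g.dens (n+1) * |g.dens n * α - g.nums n| + g.dens n * |g.dens (n+1) * α - g.nums (n+1)| := by
        calc _ ≤ |g.dens (n+1) * (g.dens n * α - g.nums n)|
              + |g.dens n * (g.dens (n+1) * α - g.nums (n+1))| := abs_sub _ _
          _ = _ := by rw [abs_mul, abs_mul, abs_of_pos hQn1pos, abs_of_pos hQnpos]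
      have hsecond : g.dens n * |g.dens (n+1) * α - g.nums (n+1)| ≤ 1/2 := by
        have h1 : g.dens n * |g.dens (n+1) * α - g.nums (n+1)| ≤ g.dens n * (1 / g.dens (n+2)) :=
          mul_le_mul_of_nonneg_left hδ1 hQnpos.le
        apply le_trans h1
        rw [mul_one_div, div_le_div_iff₀ (den_pos α hα (n+2)) (by norm_num)]
        linarith
      have : 1/2 ≤ g.dens (n+1) * |g.dens n * α - g.nums n| := by
        rw [key] at *; linarith [le_trans key.le htri]
      rw [div_le_iff₀ (by positivity), mul_comm]
      linarith
    -- |qα - p| = (q / Qn) * δn ≥ (1/2)·... 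
    have habs : g.dens n * |(q:ℝ) * α - p| = q * |g.dens n * α - g.nums n| := by
      have := congrArg abs heq
      rwa [abs_mul, abs_mul, abs_of_pos hQnpos, abs_of_pos hqpos] at this
    have hge : (q:ℝ)/2 * |g.dens n * α - g.nums n| ≤ g.dens n * |(q:ℝ) * α - p| := by
      rw [habs]
      have := abs_nonneg (g.dens n * α - g.nums n)
      nlinarith
    -- conclude
    have hδnn := abs_nonneg (g.dens n * α - g.nums n)
    have hδlow' : 1 ≤ 4*K*(q:ℝ) * |g.dens n * α - g.nums n| := by
      have hA : 2 * g.dens (n+1) ≤ 4*K*(q:ℝ) := by linarith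
      have := mul_le_mul_of_nonneg_right hA hδnn
      have h2d : 0 < 2 * g.dens (n+1) := by linarith
      rw [div_le_iff₀ h2d] at hδn
      linarith
    rw [div_le_iff₀ hqpos, show (8*(B+1)) = 8*K from rfl,
      div_le_iff₀ (by linarith : (0:ℝ) < 8*K)]
    have hmain : g.dens n * 1 ≤ g.dens n * (|(q:ℝ)*α - p| * q * (8*K)) := by
      have hRHS : g.dens n * (|(q:ℝ)*α - p| * q * (8*K))
          = (q:ℝ) * (q * |g.dens n * α - g.nums n|) * (8*K) := by
        rw [show g.dens n * (|(q:ℝ)*α - p| * ↑q * (8*K))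
            = (g.dens n * |(q:ℝ)*α - p|) * ↑q * (8*K) by ring, habs]; ring
      rw [hRHS, mul_one]
      nlinarith [mul_le_mul_of_nonneg_left hδlow' (le_of_lt hqpos)]
    have := le_of_mul_le_mul_left hmain hQnpos
    linarith
  · -- p/q ≠ Pn/Qn
    have hnum : (1:ℝ) ≤ |(p:ℝ) * g.dens n - g.nums n * q| := by
      rw [hpn, hqn]
      have : ((p * qn - pn * q : ℤ) : ℝ) = (p:ℝ) * qn - (pn:ℝ) * q := by push_cast; ring
      rw [← this]
      exact_mod_cast Int.one_le_abs (sub_ne_zero.mpr hcase)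
    -- q(Qnα - Pn) - Qn(qα - p) = pQn - Pnq  ... sign: 
    have hiden : (p:ℝ) * g.dens n - g.nums n * q
        = (q:ℝ) * (g.dens n * α - g.nums n) - g.dens n * ((q:ℝ) * α - p) := by ring
    have h1 : (1:ℝ) ≤ q * |g.dens n * α - g.nums n| + g.dens n * |(q:ℝ)*α - p| := by
      calc (1:ℝ) ≤ |(p:ℝ) * g.dens n - g.nums n * q| := hnum
        _ ≤ |(q:ℝ) * (g.dens n * α - g.nums n)| + |g.dens n * ((q:ℝ) * α - p)| := by
            rw [hiden]; exact abs_sub _ _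
        _ = _ := by rw [abs_mul, abs_mul, abs_of_pos hqpos, abs_of_pos hQnpos]
    have h2 : 1/2 ≤ g.dens n * |(q:ℝ)*α - p| := by linarith
    rw [div_le_iff₀ hqpos]
    have hm : g.dens n * |(q:ℝ)*α - ↑p| ≤ 2 * ↑q * |(q:ℝ)*α - ↑p| :=
      mul_le_mul_of_nonneg_right hQn (abs_nonneg _)
    have h4 : 1/4 ≤ |(q:ℝ)*α - p| * q := by linarith
    have h5 : 1/(8*(B+1)) ≤ 1/4 := by
      rw [div_le_div_iff₀ (by linarith : (0:ℝ) < 8*(B+1)) (by norm_num : (0:ℝ) < 4)]; linarith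
    linarith



lemma dNI_le (x : ℝ) (k : ℤ) : distNearestInt x ≤ |x - k| := by
  unfold distNearestInt
  rw [abs_sub_round_eq_min]
  have hf : Int.fract x = x - (⌊x⌋:ℝ) := rfl
  rcases le_or_gt (k:ℝ) (⌊x⌋:ℝ) with h | h
  · calc min (Int.fract x) (1 - Int.fract x) ≤ Int.fract x := min_le_left _ _
      _ ≤ x - k := by rw [hf]; linarith
      _ ≤ |x - k| := le_abs_self _
  · have hk : (⌊x⌋:ℝ) + 1 ≤ k := by exact_mod_cast Int.lt_iff_add_one_le.mp (by exact_mod_cast h)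
    calc min (Int.fract x) (1 - Int.fract x) ≤ 1 - Int.fract x := min_le_right _ _
      _ ≤ -(x - k) := by rw [hf]; linarith
      _ ≤ |x - k| := neg_le_abs _
  
lemma dNI_neg (x : ℝ) : distNearestInt (-x) = distNearestInt x := by
  have h1 : ∀ y : ℝ, distNearestInt (-y) ≤ distNearestInt y := by
    intro y
    calc distNearestInt (-y) ≤ |(-y) - (-(round y) : ℤ)| := dNI_le _ _
      _ = |y - round y| := by push_cast; rw [← abs_neg]; ring_nf
      _ = distNearestInt y := rfl
  exact le_antisymm (by simpa using h1 x) (by simpa using h1 (-x))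

lemma dNI_half (x : ℝ) : distNearestInt x ≤ 1/2 := abs_sub_round x

-- the covering predicate
def Cov (α N r : ℝ) : Prop := ∀ x : ℝ,
  (∃ j : ℕ, (j:ℝ) ≤ N ∧ ∃ k : ℤ, 0 ≤ x + j*α - k ∧ x + j*α - k ≤ r) ∧
  (∃ j : ℕ, (j:ℝ) ≤ N ∧ ∃ k : ℤ, -r ≤ x + j*α - k ∧ x + j*α - k ≤ 0)

lemma cov_base (α : ℝ) : Cov α 0 1 := by
  intro x
  constructor
  · exact ⟨0, by norm_num, ⌊x⌋, by
      simp only [Nat.cast_zero, zero_mul, add_zero]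
      constructor
      · linarith [Int.floor_le x]
      · linarith [Int.lt_floor_add_one x]⟩
  · exact ⟨0, by norm_num, ⌈x⌉, by
      simp only [Nat.cast_zero, zero_mul, add_zero]
      constructor
      · linarith [Int.ceil_lt_add_one x]
      · linarith [Int.le_ceil x]⟩

lemma cov_mono {α N r N' r' : ℝ} (h : Cov α N r) (hN : N ≤ N') (hr : r ≤ r') : Cov α N' r' := by
  intro x
  obtain ⟨⟨j, hj, k, h1, h2⟩, ⟨j', hj', k', h1', h2'⟩⟩ := h x
  exact ⟨⟨j, hj.trans hN, k, h1, h2.trans hr⟩, ⟨j', hj'.trans hN, k', le_trans (by linarith) h1', h2'⟩⟩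

lemma cov_step {α N r : ℝ} (hr : 0 < r) (q : ℕ) (hq : 1 ≤ q) (p : ℤ)
    (hε : (q:ℝ)*α - p ≠ 0) (h : Cov α N r) :
    Cov α (N + (r/|(q:ℝ)*α - p| + 1)*q) |(q:ℝ)*α - p| := by
  set ε := (q:ℝ)*α - p with hεdef
  have hεabs : 0 < |ε| := abs_pos.mpr hε
  intro x
  obtain ⟨⟨j, hj, k, hy0, hyr⟩, ⟨j', hj', k', hy0', hyr'⟩⟩ := h x
  have hqR : (1:ℝ) ≤ (q:ℝ) := by exact_mod_cast hq
  rcases lt_or_gt_of_ne hε with hneg | hpos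
  · -- ε < 0 : use the nonneg-side witness y ∈ [0, r]
    set y := x + j*α - k with hydef
    have habs : |ε| = -ε := abs_of_neg hneg
    set t : ℤ := ⌊y / (-ε)⌋ with htdef
    have hyε : 0 ≤ y / (-ε) := div_nonneg hy0 (by linarith)
    have ht0 : 0 ≤ t := Int.floor_nonneg.mpr hyε
    have htle : (t:ℝ) ≤ y / (-ε) := Int.floor_le _
    have htgt : y / (-ε) < t + 1 := Int.lt_floor_add_one _
    have hεn : (0:ℝ) < -ε := by linarith
    have h1 : (t:ℝ) * (-ε) ≤ y := (le_div_iff₀ hεn).mp htle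
    have h2 : y < ((t:ℝ) + 1) * (-ε) := (div_lt_iff₀ hεn).mp htgt
    have htr : (t:ℝ) + 1 ≤ r/|ε| + 1 := by
      have hd : y / (-ε) ≤ r / (-ε) := by gcongr
      rw [habs]; linarith
    have key : ∀ s : ℕ, x + ((j + s*q : ℕ):ℝ)*α - ((k + s*p : ℤ):ℝ) = y + (s:ℝ)*ε := by
      intro s; rw [hydef, hεdef]; push_cast; ring
    have htnat : ((t.toNat : ℕ):ℝ) = (t:ℝ) := by exact_mod_cast Int.toNat_of_nonneg ht0
    constructor
    · refine ⟨j + t.toNat*q, ?_, k + t.toNat*p, ?_, ?_⟩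
      · push_cast [htnat]
        have : (t:ℝ)*(q:ℝ) ≤ (r/|ε|+1)*q := by
          apply mul_le_mul_of_nonneg_right _ (by positivity)
          linarith
        linarith
      · rw [key t.toNat, htnat]; linarith
      · rw [key t.toNat, htnat]; linarith
    · refine ⟨j + (t.toNat+1)*q, ?_, k + ((t.toNat+1 : ℕ) : ℤ)*p, ?_, ?_⟩
      · push_cast [htnat]
        have : ((t:ℝ)+1)*(q:ℝ) ≤ (r/|ε|+1)*q := by
          apply mul_le_mul_of_nonneg_right htr (by positivity)
        linarith
      · rw [key (t.toNat+1)]; push_cast [htnat]; linarith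
      · rw [key (t.toNat+1)]; push_cast [htnat]; linarith
  · -- ε > 0 : use the nonpos-side witness y ∈ [-r, 0]
    set y := x + j'*α - k' with hydef
    have habs : |ε| = ε := abs_of_pos hpos
    set t : ℤ := ⌊(-y) / ε⌋ with htdef
    have hyε : 0 ≤ (-y) / ε := div_nonneg (by linarith) hpos.le
    have ht0 : 0 ≤ t := Int.floor_nonneg.mpr hyε
    have htle : (t:ℝ) ≤ (-y) / ε := Int.floor_le _
    have htgt : (-y) / ε < t + 1 := Int.lt_floor_add_one _
    have h1 : (t:ℝ) * ε ≤ -y := (le_div_iff₀ hpos).mp htle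
    have h2 : -y < ((t:ℝ) + 1) * ε := (div_lt_iff₀ hpos).mp htgt
    have htr : (t:ℝ) + 1 ≤ r/|ε| + 1 := by
      have h3 : (-y)/ε ≤ r/ε := by gcongr; linarith
      rw [habs]; linarith
    have key : ∀ s : ℕ, x + ((j' + s*q : ℕ):ℝ)*α - ((k' + s*p : ℤ):ℝ) = y + (s:ℝ)*ε := by
      intro s; rw [hydef, hεdef]; push_cast; ring
    have htnat : ((t.toNat : ℕ):ℝ) = (t:ℝ) := by exact_mod_cast Int.toNat_of_nonneg ht0
    constructor
    · refine ⟨j' + (t.toNat+1)*q, ?_, k' + ((t.toNat+1 : ℕ) : ℤ)*p, ?_, ?_⟩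
      · push_cast [htnat]
        have : ((t:ℝ)+1)*(q:ℝ) ≤ (r/|ε|+1)*q := mul_le_mul_of_nonneg_right htr (by positivity)
        linarith
      · rw [key (t.toNat+1)]; push_cast [htnat]; linarith
      · rw [key (t.toNat+1)]; push_cast [htnat]; rw [habs]; linarith
    · refine ⟨j' + t.toNat*q, ?_, k' + t.toNat*p, ?_, ?_⟩
      · push_cast [htnat]
        have : (t:ℝ)*(q:ℝ) ≤ (r/|ε|+1)*q := by
          apply mul_le_mul_of_nonneg_right _ (by positivity); linarith
        linarith
      · rw [key t.toNat, htnat]; rw [habs]; linarith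
      · rw [key t.toNat, htnat]; linarith



-- natural-number version of num_den_int
lemma num_den_int' (α : ℝ) (hα : Irrational α) (n : ℕ) :
    ∃ (p : ℤ) (q : ℕ), (GenContFract.of α).nums n = (p:ℝ) ∧
      (GenContFract.of α).dens n = (q:ℝ) ∧ 1 ≤ q := by
  obtain ⟨⟨p, hp⟩, ⟨qz, hqz⟩⟩ := num_den_int α hα n
  have h1 : (1:ℝ) ≤ (qz:ℝ) := hqz ▸ den_ge_one α hα n
  have h1' : 1 ≤ qz := by exact_mod_cast h1
  refine ⟨p, qz.toNat, hp, ?_, ?_⟩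
  · rw [hqz]; exact_mod_cast (Int.toNat_of_nonneg (by linarith)).symm
  · omega

lemma delta_pos (α : ℝ) (hα : Irrational α) (B : ℝ)
    (hB : ∀ n : ℕ, ∀ b ∈ (GenContFract.of α).partDens.get? n, b ≤ B) (hB1 : 1 ≤ B) (n : ℕ) :
    1/(8*(B+1)) / (GenContFract.of α).dens n
      ≤ |(GenContFract.of α).dens n * α - (GenContFract.of α).nums n| := by
  obtain ⟨p, q, hp, hq, hq1⟩ := num_den_int' α hα n
  rw [hp, hq]
  exact_mod_cast badly α hα B hB hB1 q hq1 p

lemma cov_chain (α : ℝ) (hα : Irrational α) (B : ℝ)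
    (hB : ∀ n : ℕ, ∀ b ∈ (GenContFract.of α).partDens.get? n, b ≤ B) (hB1 : 1 ≤ B) (n : ℕ) :
    Cov α ((8*(B+1)+1) * ((GenContFract.of α).dens n + (GenContFract.of α).dens (n+1)))
      |(GenContFract.of α).dens n * α - (GenContFract.of α).nums n| := by
  set g := GenContFract.of α with hg
  set A := 8*(B+1)+1 with hA
  have hApos : (0:ℝ) < A := by rw [hA]; linarith
  have hc : (0:ℝ) < 1/(8*(B+1)) := by positivity
  -- generic facts
  have hδpos : ∀ m : ℕ, 0 < |g.dens m * α - g.nums m| := by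
    intro m
    have h := delta_pos α hα B hB hB1 m
    have := den_pos α hα m
    calc (0:ℝ) < 1/(8*(B+1)) / g.dens m := by positivity
      _ ≤ _ := h
  induction n with
  | zero =>
    obtain ⟨p, q, hp, hq, hq1⟩ := num_den_int' α hα 0
    have hq1' : (q:ℝ) = 1 := by rw [← hq]; exact den0 α
    have hqpos : (0:ℝ) < q := by exact_mod_cast hq1
    have hε : (q:ℝ)*α - p ≠ 0 := by
      have hδ := delta_pos α hα B hB hB1 0
      rw [hp, hq] at hδ
      intro h0; rw [h0, abs_zero] at hδ
      have : (0:ℝ) < 1/(8*(B+1)) / q := by positivity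
      linarith
    have hstep := cov_step one_pos q hq1 p hε (cov_base α)
    rw [hq1'] at hstep
    have heq : |(1:ℝ)*α - p| = |g.dens 0 * α - g.nums 0| := by rw [hp, hq, hq1']
    rw [heq] at hstep
    apply cov_mono hstep _ (le_refl _)
    · -- 0 + (1/δ0 + 1)*1 ≤ A*(dens 0 + dens 1)
      have hδ0 := delta_pos α hα B hB hB1 0
      rw [den0 α, div_one] at hδ0
      have hδ0pos := hδpos 0
      have hinv : 1/|g.dens 0 * α - g.nums 0| ≤ 8*(B+1) := by
        rw [div_le_iff₀ hδ0pos]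
        calc (1:ℝ) = (8*(B+1)) * (1/(8*(B+1))) := by field_simp
          _ ≤ (8*(B+1)) * |g.dens 0 * α - g.nums 0| := by
              apply mul_le_mul_of_nonneg_left hδ0 (by linarith)
      have hd1 : (1:ℝ) ≤ g.dens 1 := den_ge_one α hα 1
      have hd0 : (1:ℝ) ≤ g.dens 0 := den_ge_one α hα 0
      have h2 : A ≤ A*(g.dens 0 + g.dens 1) := by nlinarith
      rw [hA] at h2 ⊢
      linarith
  | succ m ih =>
    obtain ⟨p, q, hp, hq, hq1⟩ := num_den_int' α hα (m+1)
    have hδm := hδpos m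
    have hqpos : (0:ℝ) < q := by exact_mod_cast hq1
    have hε : (q:ℝ)*α - p ≠ 0 := by
      have hδ := delta_pos α hα B hB hB1 (m+1)
      rw [hp, hq] at hδ
      intro h0; rw [h0, abs_zero] at hδ
      have : (0:ℝ) < 1/(8*(B+1)) / q := by positivity
      linarith
    have hstep := cov_step hδm q hq1 p hε ih
    rw [show (q:ℝ) = g.dens (m+1) from hq.symm] at hstep
    have heq : |g.dens (m+1)*α - (p:ℝ)| = |g.dens (m+1) * α - g.nums (m+1)| := by rw [hp]
    rw [heq] at hstep
    apply cov_mono hstep _ (le_refl _)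
    -- index bound
    have hδ1 := delta_pos α hα B hB hB1 (m+1)
    have hδ1pos := hδpos (m+1)
    have hδm_ub : |g.dens m * α - g.nums m| ≤ 1/g.dens (m+1) := approx α hα m
    have hQpos := den_pos α hα (m+1)
    have hratio : |g.dens m * α - g.nums m| / |g.dens (m+1) * α - g.nums (m+1)| ≤ 8*(B+1) := by
      rw [div_le_iff₀ hδ1pos]
      calc |g.dens m * α - g.nums m| ≤ 1/g.dens (m+1) := hδm_ub
        _ = (8*(B+1)) * (1/(8*(B+1)) / g.dens (m+1)) := by field_simp
        _ ≤ (8*(B+1)) * |g.dens (m+1) * α - g.nums (m+1)| := by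
            apply mul_le_mul_of_nonneg_left hδ1 (by linarith)
    have hfib := den_fib_growth α hα m
    have hd := den_pos α hα m
    have hcost : (|g.dens m * α - g.nums m| / |g.dens (m+1) * α - g.nums (m+1)| + 1) * g.dens (m+1)
        ≤ A * g.dens (m+1) := by
      apply mul_le_mul_of_nonneg_right _ hQpos.le
      rw [hA]; linarith
    calc A * (g.dens m + g.dens (m+1))
          + (|g.dens m * α - g.nums m| / |g.dens (m+1) * α - g.nums (m+1)| + 1) * g.dens (m+1)
        ≤ A * (g.dens m + g.dens (m+1)) + A * g.dens (m+1) := by linarith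
      _ ≤ A * (g.dens (m+1) + g.dens (m+2)) := by nlinarith [hfib, hApos]


lemma covering (α : ℝ) (hα : Irrational α) (B : ℝ)
    (hB : ∀ n : ℕ, ∀ b ∈ (GenContFract.of α).partDens.get? n, b ≤ B) (hB1 : 1 ≤ B)
    (m : ℕ) (hm : 1 ≤ m) (x : ℝ) :
    ∃ j : ℕ, j < m ∧ distNearestInt (x + j*α) ≤ (2*(8*(B+1)+1)*(B+2)+1)/m := by
  classical
  set g := GenContFract.of α with hg
  set A := 8*(B+1)+1 with hA
  have hApos : (0:ℝ) < A := by rw [hA]; linarith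
  have hA1 : (1:ℝ) ≤ A := by rw [hA]; linarith
  have hmR : (1:ℝ) ≤ (m:ℝ) := by exact_mod_cast hm
  have hmpos : (0:ℝ) < m := by linarith
  have hC2 : (0:ℝ) < 2*A*(B+2)+1 := by rw [hA]; nlinarith
  have hex : ∃ n, ¬ (A * (g.dens n + g.dens (n+1)) ≤ (m:ℝ) - 1) := by
    obtain ⟨n, hn⟩ := den_unbounded α hα m
    refine ⟨n, ?_⟩
    push_neg
    have h1 := den_pos α hα (n+1)
    nlinarith
  obtain ⟨n0, hn0, hn0min⟩ : ∃ n0, ¬ (A * (g.dens n0 + g.dens (n0+1)) ≤ (m:ℝ) - 1) ∧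
      ∀ k, k < n0 → (A * (g.dens k + g.dens (k+1)) ≤ (m:ℝ) - 1) := by
    refine ⟨Nat.find hex, Nat.find_spec hex, fun k hk => ?_⟩
    have := Nat.find_min hex hk
    push_neg at this
    exact this
  cases n0 with
  | zero =>
    -- small m : use j = 0
    refine ⟨0, hm, ?_⟩
    push_neg at hn0
    have hd0 : g.dens 0 = 1 := den0 α
    have hd1 : g.dens 1 ≤ (B+1) * g.dens 0 := den_growth_bound α hα B hB 0
    have hmub : (m:ℝ) < A * (B+2) + 1 := by
      rw [hd0] at hn0 hd1
      rw [mul_one] at hd1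
      nlinarith
    have h12 : distNearestInt (x + (0:ℕ)*α) ≤ 1/2 := dNI_half _
    refine le_trans h12 ?_
    rw [le_div_iff₀ hmpos]
    nlinarith
  | succ n =>
    have hPn := hn0min n (by omega)
    push_neg at hn0
    obtain ⟨⟨j, hj, k, hy0, hyr⟩, _⟩ := cov_chain α hα B hB hB1 n x
    have hjm : j < m := by
      have : (j:ℝ) ≤ (m:ℝ) - 1 := le_trans hj hPn
      have : (j:ℝ) < m := by linarith
      exact_mod_cast this
    refine ⟨j, hjm, ?_⟩
    have h1 : distNearestInt (x + j*α) ≤ |x + j*α - k| := dNI_le _ _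
    have h2 : |x + j*α - (k:ℝ)| ≤ |g.dens n * α - g.nums n| := by
      rw [abs_of_nonneg hy0]
      exact hyr
    have h3 := approx α hα n
    have hdpos := den_pos α hα (n+1)
    have hd2 : g.dens (n+2) ≤ (B+1) * g.dens (n+1) := den_growth_bound α hα B hB (n+1)
    -- m - 1 < A*(d(n+1) + d(n+2)) ≤ A*(B+2)*d(n+1)
    have h4 : (m:ℝ) - 1 < A*(B+2) * g.dens (n+1) := by nlinarith
    -- m ≥ 2 so m - 1 ≥ m/2
    have hm2 : (2:ℝ) ≤ m := by
      have hge := den_ge_one α hα n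
      have hge1 := den_ge_one α hα (n+1)
      nlinarith [hPn]
    have h5 : (m:ℝ)/2 ≤ (m:ℝ) - 1 := by linarith
    have h6 : (m:ℝ)/2 < A*(B+2) * g.dens (n+1) := lt_of_le_of_lt h5 h4
    have h7 : 1 / g.dens (n+1) ≤ 2*A*(B+2)/m := by
      rw [div_le_div_iff₀ hdpos hmpos]
      have hAB : (0:ℝ) < A*(B+2) := by nlinarith
      nlinarith
    calc distNearestInt (x + j*α) ≤ |g.dens n * α - g.nums n| := le_trans h1 h2
      _ ≤ 1 / g.dens (n+1) := h3
      _ ≤ 2*A*(B+2)/m := h7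
      _ ≤ (2*A*(B+2)+1)/m := by gcongr; linarith
  
lemma separation (α : ℝ) (hα : Irrational α) (B : ℝ)
    (hB : ∀ n : ℕ, ∀ b ∈ (GenContFract.of α).partDens.get? n, b ≤ B) (hB1 : 1 ≤ B)
    (m : ℕ) (hm : 1 ≤ m) (j j' : ℕ) (hj : j < m) (hj' : j' < m) (hne : j ≠ j') :
    1/(8*(B+1))/m ≤ distNearestInt (((j:ℝ) - (j':ℝ))*α) := by
  have hc : (0:ℝ) < 1/(8*(B+1)) := by positivity
  have hmR : (0:ℝ) < (m:ℝ) := by exact_mod_cast Nat.lt_of_lt_of_le Nat.zero_lt_one hm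
  -- reduce to d := |j - j'|
  have key : ∀ (a b : ℕ), b < a → a < m → 1/(8*(B+1))/m ≤ distNearestInt (((a:ℝ) - (b:ℝ))*α) := by
    intro a b hba ham
    set d : ℕ := a - b with hd
    have hd1 : 1 ≤ d := by omega
    have hdm : d < m := by omega
    have hcast : ((a:ℝ) - (b:ℝ)) = (d:ℝ) := by
      rw [hd]; push_cast [Nat.cast_sub hba.le]; ring
    rw [hcast]
    have hbad := badly α hα B hB hB1 d hd1 (round ((d:ℝ)*α))
    have : distNearestInt ((d:ℝ)*α) = |(d:ℝ)*α - round ((d:ℝ)*α)| := rfl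
    rw [this]
    refine le_trans ?_ hbad
    have hdR : (1:ℝ) ≤ (d:ℝ) := by exact_mod_cast hd1
    have hdmR : (d:ℝ) ≤ (m:ℝ) := by exact_mod_cast hdm.le
    have hdpos : (0:ℝ) < (d:ℝ) := by linarith
    exact div_le_div_of_nonneg_left hc.le hdpos hdmR
  rcases Nat.lt_or_ge j' j with h | h
  · exact key j j' h hj
  · have hlt : j < j' := by omega
    have := key j' j hlt hj'
    have hneg : ((j:ℝ) - (j':ℝ))*α = -(((j':ℝ) - (j:ℝ))*α) := by ring
    rw [hneg, dNI_neg]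
    exact this

/-- Let α be irrational with bounded partial quotients.  Then there are
constants C₁, C₂ > 0 such that for each m ≥ 1 the lengths of the intervals of
the partition of the circle determined by 0, −α, …, −(m−1)α are between C₁/m
and C₂/m; equivalently, the points are pairwise C₁/m-separated and every point
of the circle is within C₂/m of one of them. -/
theorem stmt3 (α : ℝ) (hα : Irrational α)
    (hbounded : ∃ B : ℝ, ∀ n : ℕ, ∀ b ∈ (GenContFract.of α).partDens.get? n, b ≤ B) :
    ∃ C₁ C₂ : ℝ, 0 < C₁ ∧ 0 < C₂ ∧ ∀ m : ℕ, 1 ≤ m →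
      (∀ j j' : ℕ, j < m → j' < m → j ≠ j' →
        C₁ / m ≤ distNearestInt (((j : ℝ) - (j' : ℝ)) * α)) ∧
      (∀ x : ℝ, ∃ j : ℕ, j < m ∧ distNearestInt (x + (j : ℝ) * α) ≤ C₂ / m) := by
  obtain ⟨B₀, hB₀⟩ := hbounded
  set B := max B₀ 1 with hBdef
  have hB : ∀ n : ℕ, ∀ b ∈ (GenContFract.of α).partDens.get? n, b ≤ B :=
    fun n b h => le_trans (hB₀ n b h) (le_max_left _ _)
  have hB1 : (1:ℝ) ≤ B := le_max_right _ _
  refine ⟨1/(8*(B+1)), 2*(8*(B+1)+1)*(B+2)+1, by positivity, by nlinarith, fun m hm => ?_⟩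
  constructor
  · intro j j' hj hj' hne
    exact separation α hα B hB hB1 m hm j j' hj hj' hne
  · intro x
    exact covering α hα B hB hB1 m hm x
end

section
/- Let β = (p₁ + p₂α)/q with p₁, p₂ ∈ ℤ, q ∈ ℕ, q ≥ 1, and let α be irrational with ‖jα‖ ≥ C₁/|j| for all nonzero integers j. If 0 ≤ r, s < m and β − sα + rα ∉ ℤ, then ‖β + (r−s)α‖ ≥ min(C₁/(q(q+|p₂|)m), 1/(qm)). -/
lemma distNearestInt_le (x : ℝ) (n : ℤ) : distNearestInt x ≤ |x - n| := round_le x n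

lemma distNearestInt_int_add (n : ℤ) (x : ℝ) :
    distNearestInt ((n : ℝ) + x) = distNearestInt x := by
  unfold distNearestInt
  rw [round_intCast_add]
  push_cast
  ring_nf

/-- Let β = (p₁ + p₂α)/q with p₁, p₂ ∈ ℤ, q ≥ 1, and let α be irrational with
‖jα‖ ≥ C₁/|j| for all nonzero integers j.  If 0 ≤ r, s < m and β − sα + rα ∉ ℤ,
then ‖β + (r−s)α‖ ≥ min(C₁/(q(q+|p₂|)m), 1/(qm)). -/
theorem stmt5 (α : ℝ) (hα : Irrational α)
    (C₁ : ℝ) (hC₁ : 0 < C₁)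
    (hbpq : ∀ j : ℤ, j ≠ 0 → C₁ / |(j : ℝ)| ≤ distNearestInt ((j : ℝ) * α))
    (p₁ p₂ : ℤ) (q : ℕ) (hq : 1 ≤ q) (β : ℝ)
    (hβ : β = ((p₁ : ℝ) + (p₂ : ℝ) * α) / q)
    (m r s : ℕ) (hr : r < m) (hs : s < m)
    (hnotint : ¬ ∃ k : ℤ, β - (s : ℝ) * α + (r : ℝ) * α = (k : ℝ)) :
    min (C₁ / ((q : ℝ) * ((q : ℝ) + |(p₂ : ℝ)|) * m)) (1 / ((q : ℝ) * m)) ≤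
      distNearestInt (β + ((r : ℝ) - (s : ℝ)) * α) := by
  have hq0 : (0:ℝ) < q := by exact_mod_cast hq
  have hm0 : (0:ℝ) < m := by
    have : 0 < m := by omega
    exact_mod_cast this
  set x : ℝ := β + ((r : ℝ) - (s : ℝ)) * α with hx
  set j : ℤ := p₂ + q * ((r : ℤ) - s) with hj
  have hqx : (q:ℝ) * x = (p₁ : ℝ) + (j : ℝ) * α := by
    rw [hx, hβ, hj]
    push_cast
    field_simp
    ring
  -- key: q * distNearestInt x ≥ distNearestInt (q*x)
  have hkey : distNearestInt ((q:ℝ) * x) ≤ (q:ℝ) * distNearestInt x := by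
    have := distNearestInt_le ((q:ℝ) * x) ((q:ℤ) * round x)
    calc distNearestInt ((q:ℝ) * x) ≤ |(q:ℝ) * x - ((q:ℤ) * round x : ℤ)| := this
      _ = (q:ℝ) * distNearestInt x := by
          unfold distNearestInt
          push_cast
          rw [← mul_sub, abs_mul, abs_of_pos hq0]
  by_cases hj0 : j = 0
  · -- x = p₁ / q, not an integer
    have hxval : x = (p₁ : ℝ) / q := by
      have : (q:ℝ) * x = (p₁ : ℝ) := by rw [hqx, hj0]; simp
      field_simp at this ⊢
      linarith
    have hxne : x ≠ (round x : ℝ) := by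
      intro h
      exact hnotint ⟨round x, by rw [← h, hx]; ring⟩
    have hne : p₁ - (q:ℤ) * round x ≠ 0 := by
      intro h
      apply hxne
      have h' : (p₁:ℝ) = (q:ℝ) * round x := by
        have := sub_eq_zero.mp h
        exact_mod_cast congrArg (fun z : ℤ => (z:ℝ)) (by linarith : p₁ = (q:ℤ) * round x)
      rw [hxval, h']
      field_simp
      rw [round_intCast]
    have h1 : (1:ℝ) ≤ |(p₁ : ℝ) - (q:ℝ) * round x| := by
      have h2 : (1:ℤ) ≤ |p₁ - (q:ℤ) * round x| := Int.one_le_abs hne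
      have : ((|p₁ - (q:ℤ) * round x| : ℤ) : ℝ) = |(p₁ : ℝ) - (q:ℝ) * round x| := by
        push_cast [Int.cast_abs]
        ring_nf
      calc (1:ℝ) ≤ ((|p₁ - (q:ℤ) * round x| : ℤ) : ℝ) := by exact_mod_cast h2
        _ = |(p₁ : ℝ) - (q:ℝ) * round x| := this
    have hd : 1 / (q:ℝ) ≤ distNearestInt x := by
      rw [div_le_iff₀ hq0]
      unfold distNearestInt
      have heq : (p₁:ℝ) - (q:ℝ) * round x = (x - round x) * q := by
        rw [hxval]; field_simp
      calc (1:ℝ) ≤ |(p₁ : ℝ) - (q:ℝ) * round x| := h1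
        _ = |x - round x| * q := by rw [heq, abs_mul, abs_of_pos hq0]
    refine le_trans (min_le_right _ _) (le_trans ?_ hd)
    rw [div_le_div_iff₀ (by positivity) hq0]
    have hm1 : (1:ℝ) ≤ m := by
      have : 1 ≤ m := by omega
      exact_mod_cast this
    nlinarith
  · -- j ≠ 0 case
    have hdq : C₁ / |(j : ℝ)| ≤ distNearestInt ((q:ℝ) * x) := by
      rw [hqx, distNearestInt_int_add p₁ ((j:ℝ) * α)]
      exact hbpq j hj0
    have hjabs : |(j : ℝ)| ≤ ((q:ℝ) + |(p₂ : ℝ)|) * m := by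
      have h1 : |j| ≤ |p₂| + (q:ℤ) * (m - 1) := by
        have : |(r : ℤ) - s| ≤ (m:ℤ) - 1 := by
          rw [abs_sub_le_iff]; omega
        calc |j| ≤ |p₂| + |(q:ℤ) * ((r:ℤ) - s)| := abs_add_le _ _
          _ = |p₂| + (q:ℤ) * |(r:ℤ) - s| := by simp [abs_mul]
          _ ≤ |p₂| + (q:ℤ) * ((m:ℤ) - 1) := by
              have hq' : (0:ℤ) ≤ q := by positivity
              nlinarith
      have h2 : |p₂| + (q:ℤ) * (m - 1) ≤ ((q:ℤ) + |p₂|) * m := by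
        have hm1 : (1:ℤ) ≤ m := by exact_mod_cast Nat.one_le_iff_ne_zero.mpr (by omega)
        have hp2 : (0:ℤ) ≤ |p₂| := abs_nonneg _
        nlinarith
      calc |(j:ℝ)| = ((|j| : ℤ) : ℝ) := by rw [Int.cast_abs]
        _ ≤ (((q:ℤ) + |p₂|) * m : ℤ) := by exact_mod_cast h1.trans h2
        _ = ((q:ℝ) + |(p₂:ℝ)|) * m := by push_cast; ring
    have hjpos : (0:ℝ) < |(j : ℝ)| := by
      simp only [abs_pos]
      exact_mod_cast hj0
    refine le_trans (min_le_left _ _) ?_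
    have hd : C₁ / ((q:ℝ) * |(j:ℝ)|) ≤ distNearestInt x := by
      rw [div_le_iff₀ (by positivity)]
      have := hdq.trans hkey
      rw [div_le_iff₀ hjpos] at this
      nlinarith [abs_nonneg (x - round x), hC₁.le]
    refine le_trans ?_ hd
    apply div_le_div_of_nonneg_left hC₁.le (by positivity)
    nlinarith
end

section
/- Let f : 𝕋 → ℝ be a piecewise constant, right-continuous function with discontinuity points ξ₁, …, ξ_p and jumps d₁, …, d_p satisfying Σᵢ dᵢ = 0. Suppose that whenever a nontrivial integer combination Σᵢ nᵢdᵢ = 0 there exist i < i′ with nᵢ, n_{i′} ≠ 0 and ξᵢ − ξ_{i′} ∉ ℤ + ℤα. Then for every m ∈ ℕ, the set of discontinuity points of the Birkhoff sum f^{(m)}(x) = Σ_{j=0}^{m−1} f(x + jα) is exactly {ξᵢ − jα mod 1 : 1 ≤ i ≤ p, 0 ≤ j < m}. -/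
open Filter Topology

private lemma shiftLeft (c x : ℝ) :
    Filter.Tendsto (fun y => y + c) (𝓝[<] x) (𝓝[<] (x + c)) := by
  apply tendsto_nhdsWithin_of_tendsto_nhds_of_eventually_within
  · exact ((continuous_add_right c).continuousAt).mono_left nhdsWithin_le_nhds
  · filter_upwards [self_mem_nhdsWithin] with y hy
    simp only [Set.mem_Iio] at hy ⊢
    linarith

private lemma irr_aux {α : ℝ} (hα : Irrational α) {a b : ℤ} (hb : b ≠ 0)
    (h : (b : ℝ) * α = (a : ℝ)) : False := by
  have hb' : (b : ℝ) ≠ 0 := Int.cast_ne_zero.mpr hb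
  have : α = (((a : ℚ) / (b : ℚ) : ℚ) : ℝ) := by
    push_cast
    field_simp
    linarith
  exact hα ⟨(a : ℚ) / (b : ℚ), this.symm⟩

/-- Let f : 𝕋 → ℝ (a 1-periodic function on ℝ) be piecewise constant and
right-continuous, with discontinuity points ξ₁, …, ξ_p (mod 1) and nonzero
jumps d₁, …, d_p with Σ dᵢ = 0, satisfying property (P1).  Then for every m ≥ 1
the set of discontinuity points of the Birkhoff sum
f⁽ᵐ⁾(x) = Σ_{j<m} f(x + jα) is exactly {ξᵢ − jα mod 1 : 1 ≤ i ≤ p, 0 ≤ j < m}. -/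
theorem stmt6 (α : ℝ) (hα : Irrational α)
    (p : ℕ) (hp : 0 < p) (ξ : Fin p → ℝ) (d : Fin p → ℝ)
    (hξ : ∀ i, ξ i ∈ Set.Ico (0 : ℝ) 1) (hinj : Function.Injective ξ)
    (hd : ∀ i, d i ≠ 0) (hsum : ∑ i, d i = 0)
    (f : ℝ → ℝ) (hper : Function.Periodic f 1)
    -- f is continuous away from the translates of the ξᵢ
    (hcont : ∀ x : ℝ, (∀ (i : Fin p) (k : ℤ), x ≠ ξ i + (k : ℝ)) → ContinuousAt f x)
    -- f is locally constant away from the discontinuities: if the closed-open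
    -- arc (x, y] contains no translate of a ξᵢ then f x = f y
    (hconst : ∀ x y : ℝ, x ≤ y →
      (∀ (i : Fin p) (k : ℤ), ¬ (x < ξ i + (k : ℝ) ∧ ξ i + (k : ℝ) ≤ y)) → f x = f y)
    -- f is right-continuous
    (hrc : ∀ x : ℝ, ContinuousWithinAt f (Set.Ici x) x)
    -- the jump of f at ξᵢ (left limit minus right limit) equals dᵢ
    (hjump : ∀ (i : Fin p) (k : ℤ),
      Tendsto f (𝓝[<] (ξ i + (k : ℝ))) (𝓝 (f (ξ i + (k : ℝ)) + d i)))
    -- property (P1) (restricted as appropriate)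
    (hP1 : ∀ n : Fin p → ℤ, (∃ i, n i ≠ 0) → ∑ i, (n i : ℝ) * d i = 0 →
      ∃ i i' : Fin p, i < i' ∧ n i ≠ 0 ∧ n i' ≠ 0 ∧
        ¬ ∃ k k' : ℤ, ξ i - ξ i' = (k : ℝ) + (k' : ℝ) * α) :
    ∀ m : ℕ, 1 ≤ m →
      {x : ℝ | ¬ ContinuousAt (fun y => ∑ j ∈ Finset.range m, f (y + (j : ℝ) * α)) x} =
      {x : ℝ | ∃ (i : Fin p) (j : ℕ), j < m ∧ ∃ k : ℤ, x = ξ i - (j : ℝ) * α + (k : ℝ)} := by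
  classical
  intro m hm
  ext x
  simp only [Set.mem_setOf_eq]
  constructor
  · -- not in RHS implies continuous : contrapositive
    intro hdisc
    by_contra hne
    push_neg at hne
    apply hdisc
    apply tendsto_finset_sum
    intro j hj
    have h1 : ∀ (i : Fin p) (k : ℤ), x + (j : ℝ) * α ≠ ξ i + (k : ℝ) := by
      intro i k h
      exact hne i j (Finset.mem_range.mp hj) k (by linarith)
    have h2 : ContinuousAt (fun y : ℝ => f (y + (j : ℝ) * α)) x :=
      ContinuousAt.comp (hcont _ h1) ((continuous_add_right ((j : ℝ) * α)).continuousAt)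
    exact h2
  · rintro ⟨i₀, j₀, hj₀, k₀, hx⟩ hcontF
    -- the candidate jump contributions
    set c : Fin p → ℕ → ℝ :=
      fun i j => if ∃ k : ℤ, x + (j : ℝ) * α = ξ i + (k : ℝ) then d i else 0 with hc
    set δ : ℕ → ℝ := fun j => ∑ i, c i j with hδ
    -- per-translate left limits
    have stepA : ∀ j : ℕ, Tendsto (fun y => f (y + (j : ℝ) * α)) (𝓝[<] x)
        (𝓝 (f (x + (j : ℝ) * α) + δ j)) := by
      intro j
      by_cases hS : ∃ (i : Fin p) (k : ℤ), x + (j : ℝ) * α = ξ i + (k : ℝ)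
      · obtain ⟨i, k, hik⟩ := hS
        have hδj : δ j = d i := by
          show (∑ i', c i' j) = d i
          rw [Finset.sum_eq_single i]
          · simp only [hc]
            rw [if_pos ⟨k, hik⟩]
          · intro b _ hb
            simp only [hc]
            rw [if_neg]
            rintro ⟨k', hk'⟩
            have hbi : ξ b = ξ i + ((k : ℝ) - (k' : ℝ)) := by linarith
            have h0 := hξ b
            have h1 := hξ i
            have h2 : (-1 : ℝ) < ((k - k' : ℤ) : ℝ) := by push_cast; simp only [Set.mem_Ico] at h0 h1; linarith
            have h3 : ((k - k' : ℤ) : ℝ) < 1 := by push_cast; simp only [Set.mem_Ico] at h0 h1; linarith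
            have h4 : (-1 : ℤ) < k - k' := by exact_mod_cast h2
            have h5 : k - k' < 1 := by exact_mod_cast h3
            have : k = k' := by omega
            subst this
            exact hb (hinj (by linarith))
          · intro h; exact absurd (Finset.mem_univ i) h
        rw [hδj]
        have := (hjump i k).comp (by rw [← hik]; exact shiftLeft ((j : ℝ) * α) x)
        rw [← hik] at this
        exact this
      · have hδj : δ j = 0 := by
          rw [hδ]
          apply Finset.sum_eq_zero
          intro i _
          simp only [hc]
          rw [if_neg]
          rintro ⟨k, hk⟩
          exact hS ⟨i, k, hk⟩
        rw [hδj, add_zero]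
        push_neg at hS
        have hcf : ContinuousAt f (x + (j : ℝ) * α) := hcont _ hS
        exact hcf.tendsto.comp ((shiftLeft ((j : ℝ) * α) x).mono_right nhdsWithin_le_nhds)
    -- sum the limits
    have stepB : Tendsto (fun y => ∑ j ∈ Finset.range m, f (y + (j : ℝ) * α)) (𝓝[<] x)
        (𝓝 (∑ j ∈ Finset.range m, (f (x + (j : ℝ) * α) + δ j))) :=
      tendsto_finset_sum _ (fun j _ => stepA j)
    have stepC : Tendsto (fun y => ∑ j ∈ Finset.range m, f (y + (j : ℝ) * α)) (𝓝[<] x)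
        (𝓝 (∑ j ∈ Finset.range m, f (x + (j : ℝ) * α))) :=
      hcontF.tendsto.mono_left nhdsWithin_le_nhds
    have heq := tendsto_nhds_unique stepB stepC
    rw [Finset.sum_add_distrib] at heq
    have hJ : ∑ j ∈ Finset.range m, δ j = 0 := by linarith
    -- rewrite the total jump as an integer combination
    set n : Fin p → ℤ :=
      fun i => if ∃ j < m, ∃ k : ℤ, x + (j : ℝ) * α = ξ i + (k : ℝ) then 1 else 0 with hn
    have hrow : ∀ i : Fin p, ∑ j ∈ Finset.range m, c i j = (n i : ℝ) * d i := by
      intro i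
      by_cases h : ∃ j < m, ∃ k : ℤ, x + (j : ℝ) * α = ξ i + (k : ℝ)
      · obtain ⟨j, hjm, k, hjk⟩ := h
        have hni : n i = 1 := by
          simp only [hn]
          rw [if_pos ⟨j, hjm, k, hjk⟩]
        rw [hni]
        rw [Finset.sum_eq_single j]
        · simp only [hc]
          rw [if_pos ⟨k, hjk⟩]
          ring
        · intro b _ hb
          simp only [hc]
          rw [if_neg]
          rintro ⟨k', hk'⟩
          have hmul : (((j : ℤ) - (b : ℤ)) : ℝ) * α = (((k : ℤ) - k') : ℝ) := by
            push_cast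
            linear_combination hjk - hk'
          have hbj : (j : ℤ) - (b : ℤ) ≠ 0 := by
            intro h0
            exact hb (by omega : b = j)
          exact irr_aux hα hbj (by exact_mod_cast hmul)
        · intro hnot
          exact absurd (Finset.mem_range.mpr hjm) hnot
      · have hni : n i = 0 := by
          simp only [hn]
          rw [if_neg h]
        rw [hni]
        push_neg at h
        simp only [Int.cast_zero, zero_mul]
        apply Finset.sum_eq_zero
        intro j hj
        simp only [hc]
        rw [if_neg]
        rintro ⟨k, hk⟩
        exact (h j (Finset.mem_range.mp hj) k) hk
    have hJ' : ∑ i, (n i : ℝ) * d i = 0 := by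
      rw [← hJ]
      simp only [hδ]
      rw [Finset.sum_comm]
      exact Finset.sum_congr rfl (fun i _ => (hrow i).symm)
    have hn₀ : n i₀ ≠ 0 := by
      simp only [hn]
      rw [if_pos ⟨j₀, hj₀, k₀, by linarith⟩]
      exact one_ne_zero
    obtain ⟨i, i', hlt, hni, hni', hnk⟩ := hP1 n ⟨i₀, hn₀⟩ hJ'
    have hwit : ∀ b : Fin p, n b ≠ 0 →
        ∃ j < m, ∃ k : ℤ, x + (j : ℝ) * α = ξ b + (k : ℝ) := by
      intro b hb
      by_contra hcon
      refine hb ?_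
      simp only [hn]
      rw [if_neg hcon]
    obtain ⟨j, hjm, k, hjk⟩ := hwit i hni
    obtain ⟨j', hjm', k', hjk'⟩ := hwit i' hni'
    apply hnk
    refine ⟨k' - k, (j : ℤ) - (j' : ℤ), ?_⟩
    push_cast
    linarith
end

section
/- Let f : 𝕋 → ℝ be piecewise constant and right-continuous with discontinuities 0 ≤ ξ₁ < … < ξ_p < 1, jumps dᵢ = d(ξᵢ), and Σᵢ dᵢ = 0. Let a be the minimal value of f. Then ∫_𝕋 f dλ ∈ a + Σᵢ dᵢξᵢ + Σᵢ ℤdᵢ, i.e. there exist integers n₁, …, n_p with ∫ f dλ = a + Σᵢ dᵢξᵢ + Σᵢ nᵢdᵢ. -/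
open Filter Topology MeasureTheory

private lemma piece_integral {f : ℝ → ℝ} {a b c : ℝ} (hab : a ≤ b)
    (h : ∀ x, a ≤ x → x < b → f x = c) :
    IntervalIntegrable f volume a b ∧ ∫ x in a..b, f x = c * (b - a) := by
  have hb : ∀ᵐ (x : ℝ) ∂volume, x ≠ b := by
    have : volume ({b} : Set ℝ) = 0 := Real.volume_singleton
    simpa [ae_iff] using this
  have h1 : f =ᵐ[volume.restrict (Set.Ioc a b)] fun _ => c := by
    filter_upwards [ae_restrict_mem measurableSet_Ioc, ae_restrict_of_ae hb]
      with x hx hxb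
    exact h x hx.1.le (lt_of_le_of_ne hx.2 hxb)
  have hconst : IntegrableOn (fun _ : ℝ => c) (Set.Ioc a b) volume := by
    exact integrableOn_const (by simp [Real.volume_Ioc])
  have hint : IntegrableOn f (Set.Ioc a b) volume := hconst.congr h1.symm
  constructor
  · exact (intervalIntegrable_iff_integrableOn_Ioc_of_le hab).2 hint
  · have : ∫ x in a..b, f x = ∫ x in a..b, (fun _ : ℝ => c) x := by
      apply intervalIntegral.integral_congr_ae
      rw [Set.uIoc_of_le hab]
      filter_upwards [hb] with x hxb hx
      exact h x hx.1.le (lt_of_le_of_ne hx.2 hxb)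
    rw [this, intervalIntegral.integral_const, smul_eq_mul, mul_comm]

/-- Let f : 𝕋 → ℝ (1-periodic on ℝ) be piecewise constant and right-continuous
with discontinuities 0 ≤ ξ₁ < … < ξ_p < 1, jumps dᵢ, and Σ dᵢ = 0, and let a be
the minimal value of f.  Then ∫ f dλ ∈ a + Σᵢ dᵢξᵢ + Σᵢ ℤdᵢ. -/
theorem stmt7 (α : ℝ) (hα : Irrational α)
    (p : ℕ) (hp : 0 < p) (ξ : Fin p → ℝ) (d : Fin p → ℝ)
    (hmono : StrictMono ξ) (hξ0 : 0 ≤ ξ ⟨0, hp⟩) (hξ1 : ξ ⟨p - 1, Nat.sub_lt hp one_pos⟩ < 1)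
    (hd : ∀ i, d i ≠ 0) (hsum : ∑ i, d i = 0)
    (f : ℝ → ℝ) (hper : Function.Periodic f 1)
    -- f is constant on arcs containing no translate of a discontinuity point
    (hconst : ∀ x y : ℝ, x ≤ y →
      (∀ (i : Fin p) (k : ℤ), ¬ (x < ξ i + (k : ℝ) ∧ ξ i + (k : ℝ) ≤ y)) → f x = f y)
    -- f is right-continuous
    (hrc : ∀ x : ℝ, ContinuousWithinAt f (Set.Ici x) x)
    -- the jump of f at ξᵢ (left limit minus right limit) equals dᵢ
    (hjump : ∀ (i : Fin p) (k : ℤ),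
      Tendsto f (𝓝[<] (ξ i + (k : ℝ))) (𝓝 (f (ξ i + (k : ℝ)) + d i)))
    (a : ℝ) (hmin : ∀ x, a ≤ f x) (hattain : ∃ x, f x = a) :
    ∃ n : Fin p → ℤ,
      ∫ x in (0:ℝ)..1, f x = a + ∑ i, d i * ξ i + ∑ i, (n i : ℝ) * d i := by
  classical
  have hlt1 : ∀ i : Fin p, ξ i < 1 := fun i =>
    lt_of_le_of_lt (hmono.monotone (Fin.le_def.mpr (Nat.le_pred_of_lt i.isLt))) hξ1
  have hfirst : ∀ i : Fin p, ξ ⟨0, hp⟩ ≤ ξ i := fun i =>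
    hmono.monotone (Fin.le_def.mpr (Nat.zero_le _))
  have hge0 : ∀ i : Fin p, 0 ≤ ξ i := fun i => le_trans hξ0 (hfirst i)
  set ζ : ℕ → ℝ := fun i => if h : i < p then ξ ⟨i, h⟩ else ξ ⟨0, hp⟩ + 1 with hζdef
  have hζlt : ∀ (i : ℕ) (h : i < p), ζ i = ξ ⟨i, h⟩ := fun i h => dif_pos h
  have hζp : ζ p = ξ ⟨0, hp⟩ + 1 := dif_neg (lt_irrefl p)
  have hζ0 : ∀ i, 0 ≤ ζ i := by
    intro i
    by_cases h : i < p
    · rw [hζlt i h]; exact hge0 _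
    · rw [hζdef]; simp only [dif_neg h]; linarith
  have hζle : ∀ i, ζ i ≤ ξ ⟨0, hp⟩ + 1 := by
    intro i
    by_cases h : i < p
    · rw [hζlt i h]; linarith [hlt1 ⟨i, h⟩, hξ0]
    · exact le_of_eq (dif_neg h)
  have hζstep : ∀ i, i + 1 ≤ p → ζ i < ζ (i + 1) := by
    intro i hi
    have hip : i < p := hi
    rcases lt_or_eq_of_le hi with h | h
    · rw [hζlt i hip, hζlt (i+1) h]
      exact hmono (by simp [Fin.lt_def])
    · rw [hζlt i hip, h, hζp]
      linarith [hlt1 ⟨i, hip⟩, hξ0]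
  -- Step A: f is constant on [ζ i, ζ (i+1))
  have hstep : ∀ i, i + 1 ≤ p → ∀ x, ζ i ≤ x → x < ζ (i + 1) → f x = f (ζ i) := by
    intro i hi x hx1 hx2
    have hip : i < p := hi
    refine (hconst (ζ i) x hx1 ?_).symm
    rintro j k ⟨h1, h2⟩
    have hj0 : (0:ℝ) ≤ ξ j := hge0 j
    have hj1 : ξ j < 1 := hlt1 j
    have hjf : ξ ⟨0, hp⟩ ≤ ξ j := hfirst j
    have hxub : x < ξ ⟨0, hp⟩ + 1 := lt_of_lt_of_le hx2 (hζle (i+1))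
    have hk0 : 0 ≤ k := by
      by_contra hk
      push_neg at hk
      have hk' : k ≤ -1 := by omega
      have : (k : ℝ) ≤ -1 := by exact_mod_cast hk'
      have := hζ0 i
      linarith
    have hk1 : k < 1 := by
      by_contra hk
      push_neg at hk
      have : (1 : ℝ) ≤ (k : ℝ) := by exact_mod_cast hk
      linarith
    have hk : k = 0 := le_antisymm (by omega) hk0
    subst hk
    simp only [Int.cast_zero, add_zero] at h1 h2
    rw [hζlt i hip] at h1
    have hij : (⟨i, hip⟩ : Fin p) < j := hmono.lt_iff_lt.mp h1
    rcases lt_or_eq_of_le hi with h | h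
    · rw [hζlt (i+1) h] at hx2
      have : j < (⟨i+1, h⟩ : Fin p) := hmono.lt_iff_lt.mp (lt_of_le_of_lt h2 hx2)
      rw [Fin.lt_def] at hij this
      simp at hij this
      omega
    · rw [Fin.lt_def] at hij
      simp at hij
      omega
  set v : ℕ → ℝ := fun i => f (ζ i) with hvdef
  have hpiece : ∀ i, i + 1 ≤ p → IntervalIntegrable f volume (ζ i) (ζ (i+1)) ∧
      ∫ x in ζ i..ζ (i+1), f x = v i * (ζ (i+1) - ζ i) :=
    fun i hi => piece_integral (hζstep i hi).le (fun x h1 h2 => hstep i hi x h1 h2)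
  have hsumint : ∫ x in (ζ 0)..(ζ p), f x = ∑ i ∈ Finset.range p, v i * (ζ (i+1) - ζ i) := by
    rw [← intervalIntegral.sum_integral_adjacent_intervals (fun k hk => (hpiece k hk).1)]
    exact Finset.sum_congr rfl fun i hi => (hpiece i (Finset.mem_range.1 hi)).2
  have hint01 : ∫ x in (0:ℝ)..1, f x = ∑ i ∈ Finset.range p, v i * (ζ (i+1) - ζ i) := by
    have h := hper.intervalIntegral_add_eq (ξ ⟨0, hp⟩) 0
    rw [zero_add] at h
    rw [← h, ← hζp, ← hζlt 0 hp, hsumint]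
  -- jumps
  set d' : ℕ → ℝ := fun j => if h : j < p then d ⟨j, h⟩ else 0 with hd'def
  have hjrel : ∀ i, i + 1 < p → v i = v (i + 1) + d' (i + 1) := by
    intro i hi
    have hb : ζ i < ζ (i + 1) := hζstep i hi.le
    have h1 : Tendsto f (𝓝[<] (ζ (i + 1))) (𝓝 (f (ζ (i + 1)) + d ⟨i + 1, hi⟩)) := by
      have := hjump ⟨i + 1, hi⟩ 0
      simpa [hζlt (i+1) hi] using this
    have h2 : Tendsto f (𝓝[<] (ζ (i + 1))) (𝓝 (v i)) := by
      have hev : (fun _ : ℝ => v i) =ᶠ[𝓝[<] (ζ (i + 1))] f := by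
        filter_upwards [Ioo_mem_nhdsLT hb] with x hx
        exact (hstep i hi.le x hx.1.le hx.2).symm
      exact Tendsto.congr' hev tendsto_const_nhds
    have h3 := tendsto_nhds_unique h2 h1
    rw [h3, hvdef, hd'def]
    simp [dif_pos hi]
  -- prefix sums
  set T : ℕ → ℝ := fun i => ∑ j ∈ Finset.range (i + 1), d' j with hTdef
  have hTsucc : ∀ n, T (n + 1) = T n + d' (n + 1) := fun n =>
    Finset.sum_range_succ _ _
  have hvform : ∀ i, i < p → v i = v 0 + d' 0 - T i := by
    intro i
    induction i with
    | zero => intro _; simp [hTdef]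
    | succ n ih =>
      intro hi
      have hn : n < p := by omega
      have h1 := hjrel n hi
      have h2 := ih hn
      rw [hTsucc]
      linarith
  have hd'sum : ∑ j ∈ Finset.range p, d' j = 0 := by
    rw [← Fin.sum_univ_eq_sum_range (fun j => d' j) p, ← hsum]
    exact Finset.sum_congr rfl fun i _ => by simp [hd'def, i.isLt]
  have hTp : T (p - 1) = 0 := by
    have hpe : p - 1 + 1 = p := Nat.succ_pred_eq_of_pos hp
    rw [hTdef]
    simp only [hpe]
    exact hd'sum
  -- summation by parts
  set B : ℕ → ℝ := fun n => ∑ i ∈ Finset.range n, T i * (ζ (i+1) - ζ i) with hBdef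
  have hB : ∀ n, B (n + 1) = T n * ζ (n + 1) - ∑ i ∈ Finset.range (n + 1), d' i * ζ i := by
    intro n
    induction n with
    | zero => simp [hBdef, hTdef]; ring
    | succ n ih =>
      have h1 : B (n + 2) = B (n + 1) + T (n + 1) * (ζ (n + 2) - ζ (n + 1)) :=
        Finset.sum_range_succ _ _
      have h3 : ∑ i ∈ Finset.range (n + 2), d' i * ζ i
          = ∑ i ∈ Finset.range (n + 1), d' i * ζ i + d' (n + 1) * ζ (n + 1) :=
        Finset.sum_range_succ _ _
      rw [h1, ih, h3, hTsucc]
      ring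
  have hBp : B p = - ∑ i ∈ Finset.range p, d' i * ζ i := by
    have hpe : p - 1 + 1 = p := Nat.succ_pred_eq_of_pos hp
    have := hB (p - 1)
    rw [hpe] at this
    rw [this, hTp]
    ring
  -- key identity
  have htel : ∑ i ∈ Finset.range p, (ζ (i+1) - ζ i) = ζ p - ζ 0 :=
    Finset.sum_range_sub ζ p
  have hkey : ∑ i ∈ Finset.range p, v i * (ζ (i+1) - ζ i)
      = (v 0 + d' 0) + ∑ i ∈ Finset.range p, d' i * ζ i := by
    have h1 : ∑ i ∈ Finset.range p, v i * (ζ (i+1) - ζ i)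
        = ∑ i ∈ Finset.range p, ((v 0 + d' 0) * (ζ (i+1) - ζ i) - T i * (ζ (i+1) - ζ i)) := by
      refine Finset.sum_congr rfl fun i hi => ?_
      rw [hvform i (Finset.mem_range.1 hi)]
      ring
    rw [h1, Finset.sum_sub_distrib, ← Finset.mul_sum, htel,
      show (∑ x ∈ Finset.range p, T x * (ζ (x + 1) - ζ x)) = B p from rfl, hBp, hζp, hζlt 0 hp]
    ring
  -- locate the minimum
  obtain ⟨x₀, hx₀⟩ := hattain
  set y : ℝ := Int.fract x₀ with hydef
  have hy0 : 0 ≤ y := Int.fract_nonneg x₀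
  have hy1 : y < 1 := Int.fract_lt_one x₀
  have hfy : f y = a := by
    have h : f (x₀ - ⌊x₀⌋ • (1:ℝ)) = f x₀ := hper.sub_zsmul_eq ⌊x₀⌋
    have hy : y = x₀ - ⌊x₀⌋ • (1:ℝ) := by
      rw [hydef, zsmul_eq_mul, mul_one]
      exact (Int.self_sub_floor x₀).symm
    rw [hy, h, hx₀]
  obtain ⟨k, hkp, hvk⟩ : ∃ k, k + 1 ≤ p ∧ v k = a := by
    by_cases hcy : y < ξ ⟨0, hp⟩
    · refine ⟨p - 1, by omega, ?_⟩
      have hpe : p - 1 + 1 = p := Nat.succ_pred_eq_of_pos hp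
      have h1 : ζ (p - 1) ≤ y + 1 := by
        rw [hζlt (p-1) (by omega)]
        have := hlt1 ⟨p - 1, by omega⟩
        linarith
      have h2 : y + 1 < ζ (p - 1 + 1) := by
        rw [hpe, hζp]; linarith
      have h3 := hstep (p - 1) (by omega) (y + 1) h1 h2
      show f (ζ (p - 1)) = a
      rw [← h3, hper y, hfy]
    · push_neg at hcy
      set k := Nat.findGreatest (fun i => ζ i ≤ y) (p - 1) with hkdef
      have hk1 : ζ k ≤ y := by
        exact Nat.findGreatest_spec (P := fun i => ζ i ≤ y) (Nat.zero_le _)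
          (by show ζ 0 ≤ y; rw [hζlt 0 hp]; exact hcy)
      have hkle : k ≤ p - 1 := Nat.findGreatest_le _
      have hk2 : y < ζ (k + 1) := by
        by_cases h : k + 1 ≤ p - 1
        · have := Nat.findGreatest_is_greatest (P := fun i => ζ i ≤ y) (Nat.lt_succ_self k) h
          exact not_le.1 this
        · have : k + 1 = p := by omega
          rw [this, hζp]
          linarith [hξ0]
      refine ⟨k, by omega, ?_⟩
      show f (ζ k) = a
      rw [← hstep k (by omega) y hk1 hk2, hfy]
  -- conclusion
  refine ⟨fun i => if i.val ≤ k then 1 else 0, ?_⟩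
  have hc : v 0 + d' 0 = a + T k := by
    have := hvform k (by omega)
    linarith
  have h4 : ∑ i ∈ Finset.range p, d' i * ζ i = ∑ i, d i * ξ i := by
    rw [← Fin.sum_univ_eq_sum_range (fun j => d' j * ζ j) p]
    refine Finset.sum_congr rfl fun i _ => ?_
    simp [hd'def, hζlt i.val i.isLt, i.isLt]
  have h5 : ∑ i, ((if (i : Fin p).val ≤ k then (1:ℤ) else 0 : ℤ) : ℝ) * d i = T k := by
    have e1 : ∀ i : Fin p, ((if i.val ≤ k then (1:ℤ) else 0 : ℤ) : ℝ) * d i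
        = if i.val ≤ k then d i else 0 := by
      intro i; split <;> simp
    rw [Finset.sum_congr rfl fun i _ => e1 i]
    have e2 : ∑ i : Fin p, (if i.val ≤ k then d i else 0)
        = ∑ j ∈ Finset.range p, (if j ≤ k then d' j else 0) := by
      rw [← Fin.sum_univ_eq_sum_range (fun j => if j ≤ k then d' j else 0) p]
      refine Finset.sum_congr rfl fun i _ => ?_
      simp [hd'def, i.isLt]
    rw [e2, hTdef]
    rw [← Finset.sum_subset (Finset.range_subset_range.2 hkp)
      (fun x _ hx => by simp [Finset.mem_range] at hx; simp [if_neg (by omega : ¬ x ≤ k)])]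
    exact Finset.sum_congr rfl fun j hj => by
      simp [Finset.mem_range] at hj; simp [if_pos (by omega : j ≤ k)]
  rw [hint01, hkey, hc, h4, h5]
  ring
end

section
/- Let α be irrational with convergent denominators (qₙ) and let f : 𝕋 → ℝ be piecewise constant, right-continuous, with discontinuities ξ₁, …, ξ_p and jumps dᵢ satisfying Σᵢ dᵢ = 0. Then for every n and every x ∈ 𝕋, the difference f^{(qₙ)}(x) − f^{(qₙ)}(0) belongs to the finite set D = {Σᵢ εᵢ dᵢ : εᵢ ∈ {−2,−1,0,1,2}}. -/
open scoped Classical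


lemma dk_filter_card (q : ℕ) (t : ℝ) :
    (((Finset.range q).filter (fun s : ℕ => (s:ℝ) < t)).card) = min q ⌈t⌉.toNat := by
  have h : (Finset.range q).filter (fun s : ℕ => (s:ℝ) < t) = Finset.range (min q ⌈t⌉.toNat) := by
    ext s
    simp only [Finset.mem_filter, Finset.mem_range, lt_min_iff]
    constructor
    · rintro ⟨h1, h2⟩
      exact ⟨h1, Int.lt_toNat.2 (Int.lt_ceil.2 (by exact_mod_cast h2))⟩
    · rintro ⟨h1, h2⟩
      exact ⟨h1, by exact_mod_cast Int.lt_ceil.1 (Int.lt_toNat.1 h2)⟩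
  rw [h, Finset.card_range]

lemma dk_card_comp (q P b : ℕ) (hq : 0 < q) (hcop : IsCoprime (q:ℤ) (P:ℤ))
    (Q : ℕ → Prop) [DecidablePred Q] :
    ((Finset.range q).filter (fun j : ℕ => Q ((b + j * P) % q))).card
      = ((Finset.range q).filter Q).card := by
  set s : ℕ → ℕ := fun j => (b + j * P) % q with hs
  have hinj : Set.InjOn s (Finset.range q) := by
    intro j1 h1 j2 h2 h
    simp only [Finset.coe_range, Set.mem_Iio] at h1 h2
    have hmod : (b + j1 * P) % q = (b + j2 * P) % q := h
    have hdvd : (q:ℤ) ∣ ((j1:ℤ) - j2) * P := by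
      have hme : ((b + j1 * P : ℕ) : ℤ) ≡ ((b + j2 * P : ℕ) : ℤ) [ZMOD (q:ℕ)] :=
        Int.natCast_modEq_iff.2 hmod
      have h2 : (q:ℤ) ∣ ((b + j2 * P : ℕ) : ℤ) - ((b + j1 * P : ℕ) : ℤ) := hme.dvd
      have h3 : ((b + j2 * P : ℕ) : ℤ) - ((b + j1 * P : ℕ) : ℤ) = -(((j1:ℤ) - j2) * P) := by
        push_cast; ring
      rw [h3, dvd_neg] at h2
      exact h2
    have hdvd2 : (q:ℤ) ∣ ((j1:ℤ) - j2) := hcop.dvd_of_dvd_mul_right hdvd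
    have : ((j1:ℤ) - j2) = 0 := by
      refine Int.eq_zero_of_abs_lt_dvd hdvd2 ?_
      rw [abs_sub_lt_iff]
      constructor <;> omega
    omega
  have himg : (Finset.range q).image s = Finset.range q := by
    apply Finset.eq_of_subset_of_card_le
    · intro y hy
      rcases Finset.mem_image.1 hy with ⟨j, _, rfl⟩
      exact Finset.mem_range.2 (Nat.mod_lt _ hq)
    · rw [Finset.card_image_of_injOn hinj, Finset.card_range]
  calc ((Finset.range q).filter (fun j : ℕ => Q (s j))).card
      = (((Finset.range q).filter (fun j : ℕ => Q (s j))).image s).card := by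
        rw [Finset.card_image_of_injOn
          (hinj.mono (Finset.coe_subset.2 (Finset.filter_subset _ _)))]
    _ = ((Finset.range q).filter Q).card := by
        rw [← Finset.filter_image, himg]

lemma dk_exists_iff (a u x : ℝ) :
    (∃ k : ℤ, a < u + (k:ℝ) ∧ u + (k:ℝ) ≤ x + a) ↔ Int.fract (a + (x - u)) < x := by
  have hfr : Int.fract (a + (x - u)) = (a + (x - u)) - ⌊a + (x - u)⌋ := rfl
  constructor
  · rintro ⟨k, h1, h2⟩
    have hk : (k:ℝ) ≤ a + (x - u) := by linarith
    have hk2 : (k:ℤ) ≤ ⌊a + (x - u)⌋ := Int.le_floor.2 hk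
    have hk3 : (k:ℝ) ≤ (⌊a + (x - u)⌋ : ℝ) := by exact_mod_cast hk2
    rw [hfr]; linarith
  · intro h
    rw [hfr] at h
    refine ⟨⌊a + (x - u)⌋, by linarith, ?_⟩
    have := Int.floor_le (a + (x - u))
    linarith




set_option maxHeartbeats 2000000 in
lemma dk_count_bound (q P : ℕ) (hq : 1 ≤ q) (hcop : IsCoprime (q:ℤ) (P:ℤ))
    (α c x : ℝ) (hx : 0 < x) (hx1 : x < 1)
    (hθ : ∀ j : ℕ, j < q → |(j:ℝ) * (α - (P:ℝ)/q)| < 1/q) :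
    (q:ℝ) * x - 2 < (((Finset.range q).filter
        (fun j : ℕ => Int.fract ((j:ℝ) * α + c) < x)).card : ℝ) ∧
    ((((Finset.range q).filter (fun j : ℕ => Int.fract ((j:ℝ) * α + c) < x)).card : ℝ)
      < (q:ℝ) * x + 2) := by
  have hq0 : (0:ℝ) < q := by exact_mod_cast hq
  set θ : ℝ := α - (P:ℝ)/q with hθdef
  set b : ℕ := (⌊(q:ℝ) * Int.fract c⌋).toNat with hb
  set φ : ℝ := (q:ℝ) * Int.fract c - b with hφdef
  have hbnn : (0:ℤ) ≤ ⌊(q:ℝ) * Int.fract c⌋ :=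
    Int.floor_nonneg.2 (mul_nonneg hq0.le (Int.fract_nonneg c))
  have hbcast : (b:ℝ) = (⌊(q:ℝ) * Int.fract c⌋ : ℤ) := by
    rw [hb]; exact_mod_cast Int.toNat_of_nonneg hbnn
  have hφ0 : 0 ≤ φ := by
    rw [hφdef, hbcast]; linarith [Int.floor_le ((q:ℝ) * Int.fract c)]
  have hφ1 : φ < 1 := by
    rw [hφdef, hbcast]; linarith [Int.lt_floor_add_one ((q:ℝ) * Int.fract c)]
  set s : ℕ → ℕ := fun j => (b + j * P) % q with hs
  have hsq : ∀ j, s j < q := fun j => Nat.mod_lt _ hq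
  have hα : α = θ + (P:ℝ)/q := by rw [hθdef]; ring
  have hc : c = (⌊c⌋ : ℝ) + ((b:ℝ) + φ)/q := by
    rw [hφdef]; field_simp
    unfold Int.fract; ring
  -- key identity
  have hkey : ∀ j : ℕ, Int.fract ((j:ℝ) * α + c)
      = Int.fract (((s j : ℝ) + φ)/q + (j:ℝ) * θ) := by
    intro j
    rw [Int.fract_eq_fract]
    refine ⟨((b + j * P)/q : ℕ) + ⌊c⌋, ?_⟩
    have hdmR : (q:ℝ) * (((b + j*P)/q : ℕ) : ℝ) + (s j : ℝ) = (b:ℝ) + (j:ℝ) * P := by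
      exact_mod_cast Nat.div_add_mod (b + j*P) q
    have e1 : (j:ℝ) * α + c - (((s j : ℝ) + φ)/q + (j:ℝ) * θ)
        = ((j:ℝ)*P + (b:ℝ) - (s j : ℝ))/q + (⌊c⌋ : ℝ) := by
      rw [hα]; nth_rewrite 1 [hc]
      field_simp
      ring
    have e2 : (j:ℝ)*P + (b:ℝ) - (s j : ℝ) = q * (((b + j*P)/q : ℕ) : ℝ) := by
      linarith
    rw [e1, e2, mul_div_cancel_left₀ _ (ne_of_gt hq0)]
    simp only [Int.cast_add, Int.cast_natCast]
  have hcondeq : (Finset.range q).filter (fun j : ℕ => Int.fract ((j:ℝ) * α + c) < x)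
      = (Finset.range q).filter (fun j : ℕ => Int.fract (((s j : ℝ) + φ)/q + (j:ℝ) * θ) < x) := by
    apply Finset.filter_congr
    intro j _
    rw [hkey j]
  rw [hcondeq]
  set N := ((Finset.range q).filter
      (fun j : ℕ => Int.fract (((s j : ℝ) + φ)/q + (j:ℝ) * θ) < x)).card with hN
  set t : ℝ := (q:ℝ) * x - φ with ht
  have htq : t < q := by rw [ht]; nlinarith
  clear_value θ b φ t
  have hsjle : ∀ j : ℕ, ((s j : ℝ)) ≤ (q:ℝ) - 1 := by
    intro j
    have := hsq j
    have : (s j : ℝ) < (q:ℝ) := by exact_mod_cast this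
    have h2 : ((s j : ℕ) : ℤ) ≤ (q:ℤ) - 1 := by
      have := hsq j; omega
    exact_mod_cast h2
  rcases le_or_gt 0 θ with hsign | hsign
  · -- θ ≥ 0 case
    have hjθ : ∀ j : ℕ, j < q → 0 ≤ (j:ℝ) * θ ∧ (j:ℝ) * θ < 1/q := by
      intro j hj
      have h := hθ j hj
      have h0 : 0 ≤ (j:ℝ) * θ := mul_nonneg (by positivity) hsign
      rw [abs_of_nonneg h0] at h
      exact ⟨h0, h⟩
    constructor
    · -- lower bound
      have hsub : (Finset.range q).filter (fun j : ℕ => ((s j : ℕ) : ℝ) < t - 1)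
          ⊆ (Finset.range q).filter
            (fun j : ℕ => Int.fract (((s j : ℝ) + φ)/q + (j:ℝ) * θ) < x) := by
        intro j hj
        rcases Finset.mem_filter.1 hj with ⟨hjq, hcnd⟩
        have hjq' := Finset.mem_range.1 hjq
        refine Finset.mem_filter.2 ⟨hjq, ?_⟩
        have hδ := hjθ j hjq'
        have hS0 : (0:ℝ) ≤ (s j : ℝ) := by positivity
        have hcnd' : ((s j : ℝ)) < t - 1 := hcnd
        have hv0 : 0 ≤ ((s j : ℝ) + φ)/q + (j:ℝ) * θ :=
          add_nonneg (div_nonneg (by linarith) hq0.le) hδ.1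
        have hvx : ((s j : ℝ) + φ)/q + (j:ℝ) * θ < x := by
          have e : ((s j : ℝ) + φ + 1)/q = ((s j : ℝ) + φ)/q + 1/q := by ring
          have h2 : ((s j : ℝ) + φ + 1)/q < x := by
            rw [div_lt_iff₀ hq0]; rw [ht] at hcnd'; linarith
          rw [e] at h2; linarith [hδ.2]
        rw [Int.fract_eq_self.2 ⟨hv0, lt_trans hvx hx1⟩]
        exact hvx
      have hcard : ((Finset.range q).filter
            (fun j : ℕ => ((s j : ℕ) : ℝ) < t - 1)).card
          = min q ⌈t - 1⌉.toNat := by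
        simp only [hs]
        rw [dk_card_comp q P b (by omega) hcop (fun s : ℕ => (s:ℝ) < t - 1), dk_filter_card]
      have hge := Finset.card_le_card hsub
      rw [hcard] at hge
      have hmin : ((min q ⌈t-1⌉.toNat : ℕ) : ℝ) > (q:ℝ) * x - 2 := by
        rcases min_cases q ⌈t-1⌉.toNat with ⟨hm, _⟩ | ⟨hm, _⟩ <;> rw [hm]
        · nlinarith
        · have h1 : (⌈t-1⌉ : ℝ) ≤ ((⌈t-1⌉.toNat : ℕ) : ℝ) := by exact_mod_cast Int.self_le_toNat _
          have h2 : (t - 1 : ℝ) ≤ (⌈t-1⌉ : ℝ) := Int.le_ceil _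
          rw [ht] at h1 h2 ⊢; linarith
      calc (q:ℝ) * x - 2 < ((min q ⌈t-1⌉.toNat : ℕ) : ℝ) := hmin
        _ ≤ (N : ℝ) := by exact_mod_cast hge
    · -- upper bound
      have hsub : (Finset.range q).filter
            (fun j : ℕ => Int.fract (((s j : ℝ) + φ)/q + (j:ℝ) * θ) < x)
          ⊆ (Finset.range q).filter
            (fun j : ℕ => ((s j : ℕ) : ℝ) < t ∨ (s j : ℕ) = q - 1) := by
        intro j hj
        rcases Finset.mem_filter.1 hj with ⟨hjq, hcnd⟩
        have hjq' := Finset.mem_range.1 hjq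
        refine Finset.mem_filter.2 ⟨hjq, ?_⟩
        by_cases hlast : (s j : ℕ) = q - 1
        · exact Or.inr hlast
        · left
          have hδ := hjθ j hjq'
          have hsle : ((s j : ℝ)) ≤ (q:ℝ) - 2 := by
            have h1 := hsq j
            have h2 : (s j : ℕ) ≠ q - 1 := hlast
            have : ((s j : ℕ) : ℤ) ≤ (q:ℤ) - 2 := by omega
            exact_mod_cast this
          have hS0 : (0:ℝ) ≤ (s j : ℝ) := by positivity
          have hv0 : 0 ≤ ((s j : ℝ) + φ)/q + (j:ℝ) * θ :=
            add_nonneg (div_nonneg (by linarith) hq0.le) hδ.1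
          have hv1 : ((s j : ℝ) + φ)/q + (j:ℝ) * θ < 1 := by
            have e : ((s j : ℝ) + φ + 1)/q = ((s j : ℝ) + φ)/q + 1/q := by ring
            have h2 : ((s j : ℝ) + φ + 1)/q ≤ 1 := by
              rw [div_le_one hq0]; linarith
            rw [e] at h2; linarith [hδ.2]
          rw [Int.fract_eq_self.2 ⟨hv0, hv1⟩] at hcnd
          have hgrid : ((s j : ℝ) + φ)/q < x := by
            have := hδ.1; linarith
          rw [div_lt_iff₀ hq0] at hgrid
          show ((s j : ℝ)) < t
          rw [ht]; linarith
      have hge := Finset.card_le_card hsub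
      have hcard : ((Finset.range q).filter
            (fun j : ℕ => ((s j : ℕ) : ℝ) < t ∨ (s j : ℕ) = q - 1)).card
          = ((Finset.range q).filter
            (fun s : ℕ => ((s:ℕ) : ℝ) < t ∨ (s:ℕ) = q - 1)).card := by
        simp only [hs]
        exact dk_card_comp q P b (by omega) hcop (fun s : ℕ => ((s:ℕ):ℝ) < t ∨ s = q - 1)
      rw [hcard] at hge
      have hsplit : ((Finset.range q).filter
            (fun s : ℕ => ((s:ℕ) : ℝ) < t ∨ (s:ℕ) = q - 1)).card
          ≤ min q ⌈t⌉.toNat + 1 := by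
        rw [Finset.filter_or]
        calc _ ≤ ((Finset.range q).filter (fun s : ℕ => ((s:ℕ):ℝ) < t)).card
              + ((Finset.range q).filter (fun s : ℕ => s = q - 1)).card :=
            Finset.card_union_le _ _
          _ ≤ min q ⌈t⌉.toNat + 1 := by
            rw [dk_filter_card]
            gcongr
            rw [Finset.filter_eq']
            split <;> simp
      have hN2 : N ≤ min q ⌈t⌉.toNat + 1 := le_trans hge hsplit
      have htop : ((min q ⌈t⌉.toNat : ℕ) : ℝ) < (q:ℝ) * x + 1 := by
        rcases le_or_gt ⌈t⌉ 0 with hcl | hcl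
        · have : ⌈t⌉.toNat = 0 := Int.toNat_of_nonpos hcl
          have h2 : min q ⌈t⌉.toNat = 0 := by omega
          rw [h2]; push_cast; nlinarith
        · have h1 : ((min q ⌈t⌉.toNat : ℕ) : ℝ) ≤ ((⌈t⌉.toNat : ℕ) : ℝ) := by
            exact_mod_cast min_le_right q _
          have h2 : ((⌈t⌉.toNat : ℕ) : ℝ) = (⌈t⌉ : ℝ) := by
            exact_mod_cast Int.toNat_of_nonneg hcl.le
          have h3 : (⌈t⌉ : ℝ) < t + 1 := Int.ceil_lt_add_one t
          have h4 : t ≤ (q:ℝ) * x := by rw [ht]; linarith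
          rw [h2] at h1; linarith
      have : (N:ℝ) ≤ ((min q ⌈t⌉.toNat : ℕ) : ℝ) + 1 := by exact_mod_cast hN2
      linarith
  · -- θ < 0 case
    have hjθ : ∀ j : ℕ, j < q → -(1/q) < (j:ℝ) * θ ∧ (j:ℝ) * θ ≤ 0 := by
      intro j hj
      have h := hθ j hj
      have h0 : (j:ℝ) * θ ≤ 0 := mul_nonpos_of_nonneg_of_nonpos (by positivity) hsign.le
      rw [abs_of_nonpos h0] at h
      constructor <;> linarith
    constructor
    · -- lower bound
      have hsub : (Finset.range q).filter
            (fun j : ℕ => 1 ≤ (s j : ℕ) ∧ ((s j : ℕ) : ℝ) < t)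
          ⊆ (Finset.range q).filter
            (fun j : ℕ => Int.fract (((s j : ℝ) + φ)/q + (j:ℝ) * θ) < x) := by
        intro j hj
        rcases Finset.mem_filter.1 hj with ⟨hjq, h1, h2⟩
        have hjq' := Finset.mem_range.1 hjq
        refine Finset.mem_filter.2 ⟨hjq, ?_⟩
        have hδ := hjθ j hjq'
        have hS1 : (1:ℝ) ≤ (s j : ℝ) := by exact_mod_cast h1
        have hv0 : 0 ≤ ((s j : ℝ) + φ)/q + (j:ℝ) * θ := by
          have e : ((s j : ℝ) + φ - 1)/q = ((s j : ℝ) + φ)/q - 1/q := by ring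
          have h3 : 0 ≤ ((s j : ℝ) + φ - 1)/q := div_nonneg (by linarith) hq0.le
          rw [e] at h3; linarith [hδ.1]
        have hvx : ((s j : ℝ) + φ)/q + (j:ℝ) * θ < x := by
          have h3 : ((s j : ℝ) + φ)/q < x := by
            rw [div_lt_iff₀ hq0]; rw [ht] at h2; linarith
          linarith [hδ.2]
        rw [Int.fract_eq_self.2 ⟨hv0, lt_trans hvx hx1⟩]
        exact hvx
      have hcard : ((Finset.range q).filter
            (fun j : ℕ => 1 ≤ (s j : ℕ) ∧ ((s j : ℕ) : ℝ) < t)).card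
          = ((Finset.range q).filter (fun s : ℕ => 1 ≤ s ∧ ((s:ℕ):ℝ) < t)).card := by
        simp only [hs]
        exact dk_card_comp q P b (by omega) hcop (fun s : ℕ => 1 ≤ s ∧ ((s:ℕ):ℝ) < t)
      have hge := Finset.card_le_card hsub
      rw [hcard] at hge
      -- card of {1 ≤ s ∧ s < t} ≥ card {s < t} - 1
      have hsub2 : (Finset.range q).filter (fun s : ℕ => ((s:ℕ):ℝ) < t)
          ⊆ ((Finset.range q).filter (fun s : ℕ => 1 ≤ s ∧ ((s:ℕ):ℝ) < t)) ∪ {0} := by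
        intro m hm
        rcases Finset.mem_filter.1 hm with ⟨hmq, hmt⟩
        rcases Nat.eq_zero_or_pos m with rfl | hm1
        · exact Finset.mem_union_right _ (Finset.mem_singleton_self 0)
        · exact Finset.mem_union_left _ (Finset.mem_filter.2 ⟨hmq, hm1, hmt⟩)
      have hcard2 := Finset.card_le_card hsub2
      rw [dk_filter_card] at hcard2
      have hcard3 : min q ⌈t⌉.toNat
          ≤ ((Finset.range q).filter (fun s : ℕ => 1 ≤ s ∧ ((s:ℕ):ℝ) < t)).card + 1 := by
        calc min q ⌈t⌉.toNat
            ≤ (((Finset.range q).filter (fun s : ℕ => 1 ≤ s ∧ ((s:ℕ):ℝ) < t)) ∪ {0}).card :=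
              hcard2
          _ ≤ _ := by
              refine le_trans (Finset.card_union_le _ _) ?_
              simp
      have hminb : (t:ℝ) ≤ ((min q ⌈t⌉.toNat : ℕ) : ℝ) := by
        rcases min_cases q ⌈t⌉.toNat with ⟨hm, _⟩ | ⟨hm, _⟩ <;> rw [hm]
        · linarith
        · have h1 : (⌈t⌉ : ℝ) ≤ ((⌈t⌉.toNat : ℕ) : ℝ) := by exact_mod_cast Int.self_le_toNat _
          linarith [Int.le_ceil t]
      have hNge : ((Finset.range q).filter
            (fun s : ℕ => 1 ≤ s ∧ ((s:ℕ):ℝ) < t)).card ≤ N := hge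
      have hc3R : ((min q ⌈t⌉.toNat : ℕ) : ℝ)
          ≤ (((Finset.range q).filter (fun s : ℕ => 1 ≤ s ∧ ((s:ℕ):ℝ) < t)).card : ℝ) + 1 := by
        exact_mod_cast hcard3
      have hNgeR : (((Finset.range q).filter
            (fun s : ℕ => 1 ≤ s ∧ ((s:ℕ):ℝ) < t)).card : ℝ) ≤ (N:ℝ) := by exact_mod_cast hNge
      have h5 : (q:ℝ) * x - 2 < t - 1 := by rw [ht]; linarith
      linarith
    · -- upper bound
      have hsub : (Finset.range q).filter
            (fun j : ℕ => Int.fract (((s j : ℝ) + φ)/q + (j:ℝ) * θ) < x)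
          ⊆ (Finset.range q).filter (fun j : ℕ => ((s j : ℕ) : ℝ) < t + 1) := by
        intro j hj
        rcases Finset.mem_filter.1 hj with ⟨hjq, hcnd⟩
        have hjq' := Finset.mem_range.1 hjq
        refine Finset.mem_filter.2 ⟨hjq, ?_⟩
        have hδ := hjθ j hjq'
        rcases lt_or_ge ((s j : ℕ) : ℝ) (t + 1) with hcon | hcon
        · exact hcon
        exfalso
        have hcon' : t + 1 ≤ (s j : ℝ) := hcon
        have hv1 : ((s j : ℝ) + φ)/q + (j:ℝ) * θ < 1 := by
          have h2 : ((s j : ℝ) + φ)/q < 1 := by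
            rw [div_lt_one hq0]; linarith [hsjle j]
          linarith [hδ.2]
        have hvx : x ≤ ((s j : ℝ) + φ)/q + (j:ℝ) * θ := by
          have e : ((s j : ℝ) + φ - 1)/q = ((s j : ℝ) + φ)/q - 1/q := by ring
          have h3 : x ≤ ((s j : ℝ) + φ - 1)/q := by
            rw [le_div_iff₀ hq0]; rw [ht] at hcon'; linarith
          rw [e] at h3; linarith [hδ.1]
        have hv0 : 0 ≤ ((s j : ℝ) + φ)/q + (j:ℝ) * θ := le_trans hx.le hvx
        rw [Int.fract_eq_self.2 ⟨hv0, hv1⟩] at hcnd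
        linarith
      have hge := Finset.card_le_card hsub
      have hcard : ((Finset.range q).filter
            (fun j : ℕ => ((s j : ℕ) : ℝ) < t + 1)).card
          = min q ⌈t+1⌉.toNat := by
        simp only [hs]
        rw [dk_card_comp q P b (by omega) hcop (fun s : ℕ => ((s:ℕ):ℝ) < t + 1), dk_filter_card]
      rw [hcard] at hge
      have htop : ((min q ⌈t+1⌉.toNat : ℕ) : ℝ) < (q:ℝ) * x + 2 := by
        rcases le_or_gt ⌈t+1⌉ 0 with hcl | hcl
        · have h0 : ⌈t+1⌉.toNat = 0 := Int.toNat_of_nonpos hcl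
          have h2 : min q ⌈t+1⌉.toNat = 0 := by omega
          rw [h2]; push_cast; nlinarith
        · have h1 : ((min q ⌈t+1⌉.toNat : ℕ) : ℝ) ≤ ((⌈t+1⌉.toNat : ℕ) : ℝ) := by
            exact_mod_cast min_le_right q _
          have h2 : ((⌈t+1⌉.toNat : ℕ) : ℝ) = (⌈t+1⌉ : ℝ) := by
            exact_mod_cast Int.toNat_of_nonneg hcl.le
          have h3 : (⌈t+1⌉ : ℝ) < t + 2 := by have := Int.ceil_lt_add_one (t+1); linarith
          have h4 : t ≤ (q:ℝ) * x := by rw [ht]; linarith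
          rw [h2] at h1; linarith
      have : (N:ℝ) ≤ ((min q ⌈t+1⌉.toNat : ℕ) : ℝ) := by exact_mod_cast hge
      linarith




set_option maxHeartbeats 1000000 in
/-- Let α be irrational with convergent denominators (qₙ) and f : 𝕋 → ℝ
piecewise constant, right-continuous, with discontinuities ξᵢ and jumps dᵢ,
Σ dᵢ = 0.  Then for every n and x, f⁽qₙ⁾(x) − f⁽qₙ⁾(0) lies in the finite set
D = {Σᵢ εᵢdᵢ : εᵢ ∈ {−2,…,2}}. -/
theorem stmt9 (α : ℝ) (hα : Irrational α) (a : ℕ → ℕ) (pc q : ℕ → ℕ)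
    (ha : ∀ n, 1 ≤ n → 1 ≤ a n)
    (hq0 : q 0 = 1) (hq1 : q 1 = a 1) (hqrec : ∀ n, q (n + 2) = a (n + 2) * q (n + 1) + q n)
    (hp0 : pc 0 = 0) (hp1 : pc 1 = 1) (hprec : ∀ n, pc (n + 2) = a (n + 2) * pc (n + 1) + pc n)
    (happrox : ∀ n, 1 / (2 * (q n : ℝ) * q (n + 1)) < |α - (pc n : ℝ) / q n| ∧
      |α - (pc n : ℝ) / q n| < 1 / ((q n : ℝ) * q (n + 1)))
    (p : ℕ) (hp : 0 < p) (ξ : Fin p → ℝ) (d : Fin p → ℝ)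
    (hξ : ∀ i, ξ i ∈ Set.Ico (0 : ℝ) 1)
    (hsum : ∑ i, d i = 0)
    (f : ℝ → ℝ) (hper : Function.Periodic f 1)
    -- f is a right-continuous step function with jump dᵢ at ξᵢ:
    (hstep : ∀ x y : ℝ, x < y → y - x < 1 →
      f x - f y = ∑ i, if (∃ k : ℤ, x < ξ i + (k : ℝ) ∧ ξ i + (k : ℝ) ≤ y) then d i else 0) :
    ∀ n : ℕ, ∀ x : ℝ, ∃ ε : Fin p → ℤ, (∀ i, |ε i| ≤ 2) ∧
      (∑ j ∈ Finset.range (q n), f (x + (j : ℝ) * α)) -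
        (∑ j ∈ Finset.range (q n), f ((0 : ℝ) + (j : ℝ) * α)) =
      ∑ i, (ε i : ℝ) * d i := by
  -- basic facts about q
  have hqpos : ∀ m, 1 ≤ q m := by
    have key : ∀ m, 1 ≤ q m ∧ 1 ≤ q (m + 1) := by
      intro m
      induction m with
      | zero => exact ⟨by omega, by rw [hq1]; exact ha 1 le_rfl⟩
      | succ k ih =>
        refine ⟨ih.2, ?_⟩
        rw [hqrec k]
        have := ha (k+2) (by omega)
        nlinarith [ih.1, ih.2]
    exact fun m => (key m).1
  have hqmono : ∀ m, q m ≤ q (m + 1) := by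
    intro m
    match m with
    | 0 => rw [hq0, hq1]; exact ha 1 le_rfl
    | Nat.succ k =>
      rw [hqrec k]
      have h1 := ha (k+2) (by omega)
      have h2 := hqpos k
      nlinarith [hqpos (k+1)]
  have hdet : ∀ m, (pc (m+1) : ℤ) * (q m : ℤ) - (pc m : ℤ) * (q (m+1) : ℤ) = (-1)^m := by
    intro m
    induction m with
    | zero => simp [hp0, hp1, hq0, hq1]
    | succ k ih =>
      rw [hprec k, hqrec k]
      push_cast
      rw [pow_succ]
      push_cast at ih
      linear_combination (-1 : ℤ) * ih
  intro n x
  have hcop : IsCoprime ((q n : ℤ)) ((pc n : ℤ)) := by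
    have h2 : ((-1:ℤ))^n * ((-1:ℤ))^n = 1 := by
      rw [← pow_add]
      exact Even.neg_one_pow ⟨n, rfl⟩
    exact ⟨((-1:ℤ))^n * (pc (n+1) : ℤ), (-((-1:ℤ))^n) * (q (n+1) : ℤ),
      by linear_combination ((-1:ℤ)^n) * hdet n + h2⟩
  set x' : ℝ := Int.fract x with hx'def
  have hx'0 : 0 ≤ x' := Int.fract_nonneg x
  have hx'1 : x' < 1 := Int.fract_lt_one x
  have hfloor : x - (⌊x⌋ : ℝ) = x' := rfl
  by_cases hx0 : x' = 0
  · -- x is an integer : the two sums coincide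
    refine ⟨0, by intro i; simp, ?_⟩
    have hxint : x = (⌊x⌋ : ℝ) := by
      have := hfloor; rw [hx0] at this; linarith
    have hsame : ∀ j : ℕ, f (x + (j:ℝ) * α) = f ((0:ℝ) + (j:ℝ) * α) := by
      intro j
      have e : x + (j:ℝ) * α = ((0:ℝ) + (j:ℝ) * α) + (⌊x⌋ : ℝ) * 1 := by
        rw [mul_one, zero_add]; linarith
      rw [e, (hper.int_mul ⌊x⌋) ((0:ℝ) + (j:ℝ) * α)]
    rw [Finset.sum_congr rfl (fun j _ => hsame j)]
    simp
  · have hx'pos : 0 < x' := lt_of_le_of_ne hx'0 (Ne.symm hx0)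
    -- the approximation hypothesis
    have hQ1 : 1 ≤ q n := hqpos n
    have hQR : (0:ℝ) < (q n : ℝ) := by exact_mod_cast hQ1
    have hQ'R : ((q n : ℝ)) ≤ ((q (n+1) : ℝ)) := by exact_mod_cast hqmono n
    have hθj : ∀ j : ℕ, j < q n → |(j:ℝ) * (α - (pc n : ℝ)/(q n : ℝ))| < 1/(q n : ℝ) := by
      intro j hj
      have happ := (happrox n).2
      rcases Nat.eq_zero_or_pos j with rfl | hjpos
      · simpa using one_div_pos.2 hQR
      · have hjR : (0:ℝ) < (j:ℝ) := by exact_mod_cast hjpos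
        have hjQ : (j:ℝ) < (q n : ℝ) := by exact_mod_cast hj
        rw [abs_mul, Nat.abs_cast]
        have h1 : (j:ℝ) * |α - (pc n : ℝ)/(q n : ℝ)| < (j:ℝ) * (1/((q n : ℝ) * (q (n+1) : ℝ))) :=
          mul_lt_mul_of_pos_left happ hjR
        have h2 : (j:ℝ) * (1/((q n : ℝ) * (q (n+1) : ℝ))) < 1/(q n : ℝ) := by
          have hQ'pos : (0:ℝ) < (q (n+1) : ℝ) := lt_of_lt_of_le hQR hQ'R
          rw [mul_one_div, div_lt_div_iff₀ (mul_pos hQR hQ'pos) hQR]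
          nlinarith
        linarith
    -- counting function
    set N : Fin p → ℕ := fun i => ((Finset.range (q n)).filter
        (fun j : ℕ => Int.fract ((j:ℝ) * α + (x' - ξ i)) < x')).card with hNdef
    have hNbound : ∀ i, (q n : ℝ) * x' - 2 < (N i : ℝ) ∧ (N i : ℝ) < (q n : ℝ) * x' + 2 :=
      fun i => dk_count_bound (q n) (pc n) hQ1 hcop α (x' - ξ i) x' hx'pos hx'1 hθj
    -- the sum identity
    have hsumid : (∑ j ∈ Finset.range (q n), f ((0:ℝ) + (j:ℝ) * α))
        - (∑ j ∈ Finset.range (q n), f (x + (j:ℝ) * α))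
        = ∑ i, (N i : ℝ) * d i := by
      rw [← Finset.sum_sub_distrib]
      have hterm : ∀ j ∈ Finset.range (q n), f ((0:ℝ) + (j:ℝ) * α) - f (x + (j:ℝ) * α)
          = ∑ i, if Int.fract ((j:ℝ) * α + (x' - ξ i)) < x' then d i else 0 := by
        intro j _
        have hfx : f (x + (j:ℝ) * α) = f (x' + (j:ℝ) * α) := by
          have e : x + (j:ℝ) * α = (x' + (j:ℝ) * α) + (⌊x⌋ : ℝ) * 1 := by
            rw [← hfloor]; ring
          rw [e, (hper.int_mul ⌊x⌋) (x' + (j:ℝ) * α)]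
        rw [hfx, zero_add]
        rw [hstep ((j:ℝ) * α) (x' + (j:ℝ) * α) (by linarith) (by linarith)]
        refine Finset.sum_congr rfl (fun i _ => ?_)
        exact if_congr (dk_exists_iff ((j:ℝ)*α) (ξ i) x') rfl rfl
      rw [Finset.sum_congr rfl hterm, Finset.sum_comm]
      refine Finset.sum_congr rfl (fun i _ => ?_)
      rw [← Finset.sum_filter, Finset.sum_const, hNdef, nsmul_eq_mul]
    -- define ε
    set C : ℤ := ⌊(q n : ℝ) * x'⌋ with hCdef
    have hCle : (C:ℝ) ≤ (q n : ℝ) * x' := Int.floor_le _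
    have hCgt : (q n : ℝ) * x' < (C:ℝ) + 1 := Int.lt_floor_add_one _
    refine ⟨fun i => C - (N i : ℤ), ?_, ?_⟩
    · intro i
      have hb := hNbound i
      show |C - (N i : ℤ)| ≤ 2
      rw [abs_le]
      constructor
      · have : ((C - (N i : ℤ) : ℤ) : ℝ) > -3 := by push_cast; linarith [hb.2]
        have h2 : (-3 : ℤ) < C - (N i : ℤ) := by exact_mod_cast this
        omega
      · have : ((C - (N i : ℤ) : ℤ) : ℝ) < 3 := by push_cast; linarith [hb.1]
        have h2 : C - (N i : ℤ) < 3 := by exact_mod_cast this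
        omega
    · show _ = ∑ i, ((C - (N i : ℤ) : ℤ) : ℝ) * d i
      have expand : ∑ i, ((C - (N i : ℤ) : ℤ) : ℝ) * d i
          = (C:ℝ) * (∑ i, d i) - ∑ i, (N i : ℝ) * d i := by
        rw [Finset.mul_sum, ← Finset.sum_sub_distrib]
        refine Finset.sum_congr rfl (fun i _ => ?_)
        push_cast
        ring
      rw [expand, hsum]
      linarith [hsumid]
end

section
/- Suppose α has bounded partial quotients, so ‖jα‖ ≥ c/|j| for all j ≠ 0 and q_{n+1}/qₙ ≤ 1/c. Fix x ≠ y on the circle with 2/q_{s+1} ≤ ‖x−y‖ < 2/q_s. Then for each fixed ξ ∈ 𝕋, the number of j with 0 ≤ j < q_{s+4} such that ξ − jα lies in the arc (x, y] is at most 2/c⁵ + 1. -/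
open scoped Classical

lemma round_nearest_int (v : ℝ) (m : ℤ) : |v - round v| ≤ |v - (m : ℝ)| := by
  rcases eq_or_ne m (round v) with rfl | hm
  · rfl
  · have h1 : (1 : ℝ) ≤ |(round v : ℝ) - m| := by
      have h0 : round v - m ≠ 0 := sub_ne_zero.mpr (fun h => hm h.symm)
      have := Int.one_le_abs h0
      have : (1:ℝ) ≤ |((round v - m : ℤ) : ℝ)| := by exact_mod_cast this
      simpa [Int.cast_sub] using this
    have h2 : |v - round v| ≤ 1/2 := abs_sub_round v
    have h3 : |(round v : ℝ) - m| ≤ |v - m| + |v - round v| := by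
      calc |(round v : ℝ) - m| = |(v - m) - (v - round v)| := by ring_nf
        _ ≤ |v - m| + |v - round v| := abs_sub _ _
    linarith

/-- Suppose α has bounded partial quotients, so that ‖jα‖ ≥ c/|j| for all j ≠ 0
and q_{n+1}/qₙ ≤ 1/c for the convergent denominators qₙ.  Fix x ≠ y on the
circle (represented by reals x < y with y − x = ‖x−y‖) with
2/q_{s+1} ≤ ‖x−y‖ < 2/q_s.  Then for each ξ the number of j with 0 ≤ j < q_{s+4}
and ξ − jα ∈ (x, y] is at most 2/c⁵ + 1. -/
theorem stmt11 (α : ℝ) (hα : Irrational α) (c : ℝ) (hc : 0 < c) (hc1 : c < 1)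
    (hbpq : ∀ j : ℤ, j ≠ 0 → c / |(j : ℝ)| ≤ |(j : ℝ) * α - round ((j : ℝ) * α)|)
    (q : ℕ → ℕ) (hqpos : ∀ n, 0 < q n) (hqmono : Monotone q)
    (hratio : ∀ n, (q (n + 1) : ℝ) ≤ (1 / c) * q n)
    (s : ℕ) (x y : ℝ) (hxy : x < y) (hlen : y - x < 1)
    (hlow : 2 / (q (s + 1) : ℝ) ≤ y - x) (hupp : y - x < 2 / (q s : ℝ))
    (ξ : ℝ) :
    (((Finset.range (q (s + 4))).filter
        (fun j => ∃ k : ℤ, x < ξ - (j : ℝ) * α + (k : ℝ) ∧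
          ξ - (j : ℝ) * α + (k : ℝ) ≤ y)).card : ℝ) ≤ 2 / c ^ 5 + 1 := by
  set Q : ℕ := q (s + 4) with hQ
  have hQpos : (0:ℝ) < Q := by exact_mod_cast hqpos (s+4)
  set δ : ℝ := c / Q with hδ
  have hδpos : 0 < δ := div_pos hc hQpos
  set S := (Finset.range Q).filter
      (fun j => ∃ k : ℤ, x < ξ - (j : ℝ) * α + (k : ℝ) ∧
        ξ - (j : ℝ) * α + (k : ℝ) ≤ y) with hS
  have hrange : ∀ j ∈ S, ∃ n : ℕ, n < Q ∧ (n : ℝ) = j := by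
    intro j hj
    have := (Finset.mem_filter.mp hj).1
    simpa [Finset.mem_biUnion, Finset.mem_range, eq_comm] using this
  have hwit : ∀ j ∈ S, ∃ k : ℤ, x < ξ - (j : ℝ) * α + (k : ℝ) ∧
      ξ - (j : ℝ) * α + (k : ℝ) ≤ y := by
    intro j hj
    exact (Finset.mem_filter.mp hj).2
  classical
  let K : ∀ j ∈ S, ℤ := fun j hj => (hwit j hj).choose
  let t : ∀ j ∈ S, ℝ := fun j hj => ξ - (j : ℝ) * α + (K j hj : ℝ)
  have ht1 : ∀ j hj, x < t j hj := fun j hj => (hwit j hj).choose_spec.1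
  have ht2 : ∀ j hj, t j hj ≤ y := fun j hj => (hwit j hj).choose_spec.2
  -- separation
  have hsep : ∀ j hj j' hj', j ≠ j' → δ ≤ |t j hj - t j' hj'| := by
    intro j hj j' hj' hne
    obtain ⟨n, hnQ, hn⟩ := hrange j hj
    obtain ⟨n', hn'Q, hn'⟩ := hrange j' hj'
    set m : ℤ := (n' : ℤ) - n with hm
    have hm0 : m ≠ 0 := by
      simp only [hm, sub_ne_zero]
      intro h
      apply hne
      rw [← hn, ← hn']
      exact_mod_cast congrArg (fun z : ℤ => (z : ℝ)) h.symm
    have habsZ : |m| ≤ (Q : ℤ) := by rw [hm, abs_sub_le_iff]; omega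
    have habs : |(m : ℝ)| ≤ Q := by exact_mod_cast habsZ
    have hm1 : (1:ℝ) ≤ |(m:ℝ)| := by exact_mod_cast Int.one_le_abs hm0
    have h1 : c / Q ≤ c / |(m : ℝ)| :=
      div_le_div_of_nonneg_left hc.le (by linarith) habs
    have h2 := hbpq m hm0
    have h3 : |(m : ℝ) * α - round ((m : ℝ) * α)| ≤ |t j hj - t j' hj'| := by
      have heq' : t j hj - t j' hj' = (m:ℝ) * α - (((K j' hj' - K j hj : ℤ)) : ℝ) := by
        simp only [t, hm, ← hn, ← hn']; push_cast; ring
      rw [heq']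
      exact round_nearest_int _ _
    calc δ = c / Q := rfl
      _ ≤ c / |(m:ℝ)| := h1
      _ ≤ |(m : ℝ) * α - round ((m : ℝ) * α)| := h2
      _ ≤ _ := h3
  set M : ℤ := ⌊(y - x) / δ⌋ with hM
  have hcard : S.card ≤ (Finset.Icc (0:ℤ) M).card := by
    apply Finset.card_le_card_of_injOn (fun j => if hj : j ∈ S then ⌊(t j hj - x)/δ⌋ else 0)
    · intro j hj
      simp only [Finset.mem_coe] at hj ⊢
      simp only [hj, dif_pos]
      rw [Finset.mem_Icc]
      refine ⟨Int.floor_nonneg.mpr (div_nonneg (by linarith [ht1 j hj]) hδpos.le), ?_⟩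
      apply Int.floor_le_floor
      gcongr
      exact le_of_lt hxy |>.trans_eq rfl |> fun _ => ht2 j hj |>.trans (le_refl y) |> fun h => by linarith [ht2 j hj]
    · intro j hj j' hj' heq
      simp only [Finset.mem_coe] at hj hj'
      simp only [hj, hj', dif_pos] at heq
      by_contra hne
      have h1 := hsep j hj j' hj' hne
      have h2 : |(t j hj - x)/δ - (t j' hj' - x)/δ| < 1 :=
        Int.abs_sub_lt_one_of_floor_eq_floor heq
      have h3 : (t j hj - x)/δ - (t j' hj' - x)/δ = (t j hj - t j' hj')/δ := by ring
      rw [h3, abs_div, abs_of_pos hδpos, div_lt_one hδpos] at h2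
      linarith
  have hM0 : 0 ≤ M := Int.floor_nonneg.mpr (div_nonneg (by linarith) hδpos.le)
  have hIcc : ((Finset.Icc (0:ℤ) M).card : ℝ) = (M : ℝ) + 1 := by
    rw [Int.card_Icc]
    have h := Int.toNat_of_nonneg (show (0:ℤ) ≤ M + 1 - 0 by omega)
    have : ((M + 1 - 0).toNat : ℝ) = ((M + 1 - 0 : ℤ) : ℝ) := by exact_mod_cast congrArg (fun z : ℤ => (z : ℝ)) h
    rw [this]; push_cast; ring
  have hcardR : (S.card : ℝ) ≤ (M : ℝ) + 1 := by
    rw [← hIcc]; exact_mod_cast hcard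
  have hMle : (M : ℝ) ≤ (y - x)/δ := Int.floor_le _
  have hqs : (0:ℝ) < q s := by exact_mod_cast hqpos s
  have hc4 : (Q : ℝ) ≤ (q s : ℝ) / c^4 := by
    have h1 := hratio s
    have h2 : (q (s+2) : ℝ) ≤ (1/c) * q (s+1) := by have := hratio (s+1); norm_num at this ⊢; linarith
    have h3 : (q (s+3) : ℝ) ≤ (1/c) * q (s+2) := by have := hratio (s+2); norm_num at this ⊢; linarith
    have h4 : (q (s+4) : ℝ) ≤ (1/c) * q (s+3) := by have := hratio (s+3); norm_num at this ⊢; linarith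
    have hq1 : (0:ℝ) ≤ q (s+1) := by positivity
    have hq2 : (0:ℝ) ≤ q (s+2) := by positivity
    have hq3 : (0:ℝ) ≤ q (s+3) := by positivity
    have hcinv : (0:ℝ) < 1/c := by positivity
    have step : (q (s+4) : ℝ) ≤ (1/c)*((1/c)*((1/c)*((1/c) * q s))) := by
      calc (q (s+4) : ℝ) ≤ (1/c) * q (s+3) := h4
        _ ≤ (1/c) * ((1/c) * q (s+2)) := mul_le_mul_of_nonneg_left h3 hcinv.le
        _ ≤ (1/c) * ((1/c) * ((1/c) * q (s+1))) :=
            mul_le_mul_of_nonneg_left (mul_le_mul_of_nonneg_left h2 hcinv.le) hcinv.le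
        _ ≤ (1/c) * ((1/c) * ((1/c) * ((1/c) * q s))) :=
            mul_le_mul_of_nonneg_left (mul_le_mul_of_nonneg_left
              (mul_le_mul_of_nonneg_left h1 hcinv.le) hcinv.le) hcinv.le
    calc (Q : ℝ) = q (s+4) := by rw [hQ]
      _ ≤ (1/c)*((1/c)*((1/c)*((1/c) * q s))) := step
      _ = (q s : ℝ) / c^4 := by ring
  have hfinal : (y - x)/δ ≤ 2/c^5 := by
    have h1 : (y - x)/δ = (y - x) * Q / c := by
      rw [hδ]; field_simp
    rw [h1]
    have h2 : (y - x) * Q ≤ 2/c^4 := by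
      have hle : (y - x) * Q ≤ (2 / q s) * ((q s : ℝ)/c^4) :=
        mul_le_mul hupp.le hc4 (le_of_lt hQpos) (by positivity)
      calc (y - x) * Q ≤ (2 / q s) * ((q s : ℝ)/c^4) := hle
        _ = 2/c^4 := by field_simp
    calc (y - x) * Q / c ≤ (2/c^4)/c := by gcongr
      _ = 2/c^5 := by rw [div_div, ← pow_succ]
  calc (S.card : ℝ) ≤ (M:ℝ) + 1 := hcardR
    _ ≤ (y - x)/δ + 1 := by linarith
    _ ≤ 2/c^5 + 1 := by linarith
end

section
/- Let α be irrational and suppose ξ − ξ′ = (m₁ + m₂α)/h with m₁, m₂ ∈ ℤ, |m₂| ≤ H, 1 ≤ h ≤ H, and ξ − ξ′ ∉ ℤ + ℤα. Suppose w, w′ are nonnegative integers with ‖(ξ − wα) − (ξ′ − w′α)‖ < 2/q_s and 2/q_s < 1/H. Then h(w − w′) − m₂ ≠ 0 and ‖(h(w−w′) − m₂)α‖ < 2h/q_s ≤ 2H/q_s. -/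
lemma dni_le (x : ℝ) (m : ℤ) : distNearestInt x ≤ |x - m| := by
  unfold distNearestInt
  rcases eq_or_ne (round x) m with he | he
  · rw [he]
  · have h1 : (1:ℝ) ≤ |(round x : ℝ) - m| := by
      exact_mod_cast Int.one_le_abs (sub_ne_zero.mpr he)
    have h2 := abs_sub_round x
    have h3 : |(round x : ℝ) - m| ≤ |(round x : ℝ) - x| + |x - m| := abs_sub_le _ _ _
    have h4 : |(round x : ℝ) - x| = |x - round x| := abs_sub_comm _ _
    linarith

/-- Let α be irrational and ξ − ξ′ = (m₁ + m₂α)/h with |m₂| ≤ H, 1 ≤ h ≤ H, and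
ξ − ξ′ ∉ ℤ + ℤα.  If w, w′ ≥ 0 satisfy ‖(ξ − wα) − (ξ′ − w′α)‖ < 2/q_s where
2/q_s < 1/H, then h(w−w′) − m₂ ≠ 0 and ‖(h(w−w′) − m₂)α‖ < 2h/q_s ≤ 2H/q_s. -/
theorem stmt15 (α : ℝ) (hα : Irrational α)
    (ξ ξ' : ℝ) (m₁ m₂ : ℤ) (h H : ℕ) (hh : 1 ≤ h) (hhH : h ≤ H) (hm₂ : |m₂| ≤ (H : ℤ))
    (hdiff : ξ - ξ' = ((m₁ : ℝ) + (m₂ : ℝ) * α) / h)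
    (hnot : ¬ ∃ k k' : ℤ, ξ - ξ' = (k : ℝ) + (k' : ℝ) * α)
    (w w' : ℕ) (Q : ℕ) (hQ : 0 < Q) (hQH : 2 / (Q : ℝ) < 1 / H)
    (hclose : distNearestInt ((ξ - (w : ℝ) * α) - (ξ' - (w' : ℝ) * α)) < 2 / (Q : ℝ)) :
    (h : ℤ) * ((w : ℤ) - (w' : ℤ)) - m₂ ≠ 0 ∧
    distNearestInt ((((h : ℤ) * ((w : ℤ) - (w' : ℤ)) - m₂ : ℤ) : ℝ) * α) < 2 * h / Q ∧
    2 * (h : ℝ) / Q ≤ 2 * (H : ℝ) / Q := by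
  have hh0 : (0:ℝ) < h := by exact_mod_cast hh
  have hH0 : (0:ℝ) < H := by
    have : 0 < H := lt_of_lt_of_le hh hhH
    exact_mod_cast this
  have hQ0 : (0:ℝ) < Q := by exact_mod_cast hQ
  set x : ℝ := (ξ - (w : ℝ) * α) - (ξ' - (w' : ℝ) * α) with hxdef
  set n : ℤ := (h : ℤ) * ((w : ℤ) - (w' : ℤ)) - m₂ with hndef
  have hx : (h:ℝ) * x = (m₁ : ℝ) - (n : ℝ) * α := by
    have : x = (ξ - ξ') - ((w : ℝ) - (w' : ℝ)) * α := by rw [hxdef]; ring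
    rw [this, hdiff]
    push_cast [hndef]
    field_simp
    ring
  have hn : n ≠ 0 := by
    intro h0
    rw [h0] at hx
    have hx' : x = (m₁ : ℝ) / h := by
      field_simp at hx ⊢
      rw [Int.cast_zero, zero_mul, sub_zero] at hx
      linarith [hx]
    set r := round x with hr
    have hlt : distNearestInt x < 1 / h := by
      have h1 : (1:ℝ)/H ≤ 1/h := by
        apply div_le_div_of_nonneg_left (by norm_num) hh0
        exact_mod_cast hhH
      linarith
    have h2 : distNearestInt x = |(m₁ : ℝ) - r * h| / h := by
      show |x - (r:ℝ)| = _
      have he : x - (r:ℝ) = ((m₁:ℝ) - r*h)/h := by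
        rw [hx']; field_simp
      rw [he, abs_div, abs_of_pos hh0]
    have h3 : |(m₁ : ℝ) - r * h| < 1 := by
      rw [h2] at hlt
      have := (div_lt_div_iff_of_pos_right hh0).mp hlt
      linarith
    have h4 : m₁ = r * h := by
      have h5 : |((m₁ - r * (h:ℤ) : ℤ) : ℝ)| < 1 := by push_cast; exact h3
      have h6 : |m₁ - r * (h:ℤ)| < 1 := by exact_mod_cast h5
      have := Int.abs_lt_one_iff.mp h6
      omega
    apply hnot
    refine ⟨r, (w : ℤ) - (w' : ℤ), ?_⟩
    have hxr : x = (r : ℝ) := by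
      rw [hx', h4]; push_cast; field_simp
    have : ξ - ξ' = x + ((w : ℝ) - (w' : ℝ)) * α := by rw [hxdef]; ring
    rw [this, hxr]; push_cast; ring
  refine ⟨hn, ?_, ?_⟩
  · have key : distNearestInt ((n : ℝ) * α) ≤ (h : ℝ) * distNearestInt x := by
      have := dni_le ((n : ℝ) * α) (m₁ - (h : ℤ) * round x)
      refine this.trans_eq ?_
      have : (n : ℝ) * α - ((m₁ - (h : ℤ) * round x : ℤ) : ℝ) = -((h:ℝ) * (x - round x)) := by
        push_cast
        have : (n:ℝ) * α = (m₁ : ℝ) - (h:ℝ) * x := by linarith [hx]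
        rw [this]; ring
      rw [this, abs_neg, abs_mul, abs_of_pos hh0]
      rfl
    calc distNearestInt ((n : ℝ) * α) ≤ (h : ℝ) * distNearestInt x := key
      _ < (h : ℝ) * (2 / Q) := by
          apply mul_lt_mul_of_pos_left hclose hh0
      _ = 2 * h / Q := by ring
  · have hhH' : (h:ℝ) ≤ H := by exact_mod_cast hhH
    gcongr
end
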